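/- arXiv:1509.03745 — 6 statements merged into one kernel-verified Lean document; each statement's English description precedes it below -/
import Mathlib

section
/- Let a < b be real numbers and let z be a real number with z > b or z < a. Then (1/π) · ∫_a^b (1/(z−t)) · √((t−a)/(b−t)) dt = √((z−a)/(z−b)) − 1, where all square roots are of positive real numbers. -/
open MeasureTheory intervalIntegral Set Filter Topology

/-- Algebraic identity behind the derivative computation. -/
lemma sqrt_ratio_deriv_alg (p s Z q w c σ : ℝ) (hs : s ≠ 0) (hw : w ≠ 0) (hZ : Z ≠ 0)
    (hZp : Z + p ≠ 0) (hw2 : w ^ 2 = p / s) (hc2 : c ^ 2 = (Z - s) / (Z + p))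
    (hσc : σ * c = 1) (h1 : 1 + (c * w) ^ 2 ≠ 0) (h2 : 1 + w ^ 2 ≠ 0)
    (hq : q = s + p) :
    1 / Z * w =
      2 * σ * (1 / (1 + (c * w) ^ 2) * (c * (q / s ^ 2 / (2 * w))))
        - 2 * (1 / (1 + w ^ 2) * (q / s ^ 2 / (2 * w))) := by
  have hp : p = w ^ 2 * s := by rw [hw2]; field_simp
  subst hp hq
  have hkey : ∀ X Y : ℝ, 2 * σ * (Y * (c * X)) = 2 * (Y * X) := by
    intro X Y; linear_combination (2 * (Y * X)) * hσc
  rw [hkey]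
  rw [mul_pow, hc2] at h1 ⊢
  have hfrac : 1 + (Z - s) / (Z + w ^ 2 * s) * w ^ 2 = Z * (1 + w ^ 2) / (Z + w ^ 2 * s) := by
    rw [div_mul_eq_mul_div, one_add_div hZp]
    ring
  rw [hfrac] at h1 ⊢
  field_simp
  ring

/-- For `a < b` and `z` outside `[a, b]`,
`(1/π) ∫_a^b (1/(z−t)) √((t−a)/(b−t)) dt = √((z−a)/(z−b)) − 1`. -/
theorem integral_inv_mul_sqrt_ratio (a b z : ℝ) (hab : a < b) (hz : z > b ∨ z < a) :
    (1 / Real.pi) * (∫ t in a..b, (1 / (z - t)) * Real.sqrt ((t - a) / (b - t))) =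
      Real.sqrt ((z - a) / (z - b)) - 1 := by
  have hπ : Real.pi ≠ 0 := Real.pi_ne_zero
  set A : ℝ := z - a with hAdef
  set B : ℝ := z - b with hBdef
  -- sign facts
  have hA0 : A ≠ 0 := by rcases hz with h | h <;> simp only [hAdef] <;> intro hc <;> nlinarith
  have hB0 : B ≠ 0 := by rcases hz with h | h <;> simp only [hBdef] <;> intro hc <;> nlinarith
  have hBA : 0 < B / A := by
    rcases hz with h | h
    · apply div_pos <;> simp only [hAdef, hBdef] <;> nlinarith
    · apply div_pos_of_neg_of_neg <;> simp only [hAdef, hBdef] <;> nlinarith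
  have hAB : 0 < A / B := by
    rcases hz with h | h
    · apply div_pos <;> simp only [hAdef, hBdef] <;> nlinarith
    · apply div_pos_of_neg_of_neg <;> simp only [hAdef, hBdef] <;> nlinarith
  have hzt : ∀ t ∈ Set.Icc a b, z - t ≠ 0 := by
    intro t ht
    rcases hz with h | h
    · have := ht.2; intro hc; nlinarith
    · have := ht.1; intro hc; nlinarith
  set c : ℝ := Real.sqrt (B / A) with hcdef
  set σ : ℝ := Real.sqrt (A / B) with hσdef
  have hc : 0 < c := Real.sqrt_pos.2 hBA
  have hσ : 0 < σ := Real.sqrt_pos.2 hAB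
  have hσc : σ * c = 1 := by
    rw [hσdef, hcdef, ← Real.sqrt_mul hAB.le]
    rw [show A / B * (B / A) = 1 by field_simp]
    exact Real.sqrt_one
  have hc2 : c ^ 2 = B / A := Real.sq_sqrt hBA.le
  -- the integrand
  set f : ℝ → ℝ := fun t => (1 / (z - t)) * Real.sqrt ((t - a) / (b - t)) with hfdef
  -- the antiderivative
  set F : ℝ → ℝ := fun t =>
    2 * σ * Real.arctan (c * Real.sqrt ((t - a) / (b - t)))
      - 2 * Real.arctan (Real.sqrt ((t - a) / (b - t))) with hFdef
  -- derivative of F on (a, b)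
  have hderiv : ∀ t ∈ Set.Ioo a b, HasDerivAt F (f t) t := by
    intro t ht
    have hs : 0 < b - t := by linarith [ht.2]
    have hp : 0 < t - a := by linarith [ht.1]
    have hzt' : z - t ≠ 0 := hzt t ⟨ht.1.le, ht.2.le⟩
    have hrpos : 0 < (t - a) / (b - t) := div_pos hp hs
    set w : ℝ := Real.sqrt ((t - a) / (b - t)) with hwdef
    have hwpos : 0 < w := Real.sqrt_pos.2 hrpos
    have hw2 : w ^ 2 = (t - a) / (b - t) := Real.sq_sqrt hrpos.le
    -- derivative of the rational function inside the sqrt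
    have hr : HasDerivAt (fun u : ℝ => (u - a) / (b - u)) ((b - a) / (b - t) ^ 2) t := by
      have h1 : HasDerivAt (fun u : ℝ => u - a) 1 t := (hasDerivAt_id t).sub_const a
      have h2 : HasDerivAt (fun u : ℝ => b - u) (-1) t := by
        simpa using (hasDerivAt_id t).const_sub b
      have := h1.div h2 hs.ne'
      refine this.congr_deriv ?_
      ring
    have hw : HasDerivAt (fun u : ℝ => Real.sqrt ((u - a) / (b - u)))
        ((b - a) / (b - t) ^ 2 / (2 * w)) t := hr.sqrt hrpos.ne'
    have h1 := (hw.const_mul c).arctan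
    have h2 := hw.arctan
    have hF := (h1.const_mul (2 * σ)).sub (h2.const_mul 2)
    refine hF.congr_deriv (Eq.symm ?_)
    show f t = _
    rw [hfdef]
    simp only
    rw [← hwdef]
    exact sqrt_ratio_deriv_alg (t - a) (b - t) (z - t) (b - a) w c σ hs.ne' hwpos.ne' hzt'
      (by rw [show z - t + (t - a) = A from by rw [hAdef]; ring]; exact hA0)
      hw2
      (by rw [hc2, hAdef, hBdef]; congr 1 <;> ring)
      hσc (by positivity) (by positivity) (by ring)
  -- limit at a
  have hFa : Tendsto F (𝓝[>] a) (𝓝 0) := by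
    have hcont : ContinuousAt F a := by
      have hba : b - a ≠ 0 := by intro hc'; nlinarith
      have hq : ContinuousAt (fun u : ℝ => (u - a) / (b - u)) a := by
        apply ContinuousAt.div
        · fun_prop
        · fun_prop
        · simpa using hba
      have hsqrt : ContinuousAt (fun u : ℝ => Real.sqrt ((u - a) / (b - u))) a :=
        Real.continuous_sqrt.continuousAt.comp hq
      exact (((Real.continuous_arctan.continuousAt.comp
        (hsqrt.const_mul c)).const_mul (2 * σ)).sub
        ((Real.continuous_arctan.continuousAt.comp hsqrt).const_mul 2))
    have hFa0 : F a = 0 := by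
      simp [hFdef]
    have := hcont.continuousWithinAt (s := Set.Ioi a)
    rw [ContinuousWithinAt, hFa0] at this
    exact this
  -- limit at b
  have hFb : Tendsto F (𝓝[<] b) (𝓝 (σ * Real.pi - Real.pi)) := by
    have hwTop : Tendsto (fun u : ℝ => Real.sqrt ((u - a) / (b - u))) (𝓝[<] b) atTop := by
      have h1 : Tendsto (fun u : ℝ => (u - a) / (b - u)) (𝓝[<] b) atTop := by
        have hnum : Tendsto (fun u : ℝ => u - a) (𝓝[<] b) (𝓝 (b - a)) :=
          ((continuous_id.sub continuous_const).tendsto b).mono_left nhdsWithin_le_nhds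
        have hden : Tendsto (fun u : ℝ => (b - u)⁻¹) (𝓝[<] b) atTop := by
          apply tendsto_inv_nhdsGT_zero.comp
          rw [tendsto_nhdsWithin_iff]
          constructor
          · have hcb : Continuous (fun u : ℝ => b - u) := by fun_prop
            have h := (hcb.tendsto b).mono_left (nhdsWithin_le_nhds (s := Set.Iio b))
            simpa using h
          · filter_upwards [self_mem_nhdsWithin] with u hu
            simp only [Set.mem_Iio] at hu
            simp [Set.mem_Ioi, sub_pos, hu]
        simpa [div_eq_mul_inv] using hnum.pos_mul_atTop (by linarith) hden
      have hsqrtTop : Tendsto Real.sqrt atTop atTop := by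
        refine (tendsto_rpow_atTop one_half_pos).congr fun x => ?_
        rw [← Real.sqrt_eq_rpow]
      exact hsqrtTop.comp h1
    have harc1 : Tendsto (fun u : ℝ => Real.arctan (c * Real.sqrt ((u - a) / (b - u))))
        (𝓝[<] b) (𝓝 (Real.pi / 2)) := by
      have h := Real.tendsto_arctan_atTop.mono_right nhdsWithin_le_nhds
      exact h.comp (hwTop.const_mul_atTop hc)
    have harc2 : Tendsto (fun u : ℝ => Real.arctan (Real.sqrt ((u - a) / (b - u))))
        (𝓝[<] b) (𝓝 (Real.pi / 2)) := by
      have h := Real.tendsto_arctan_atTop.mono_right nhdsWithin_le_nhds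
      exact h.comp hwTop
    have hcomb := ((harc1.const_mul (2 * σ)).sub (harc2.const_mul 2))
    convert hcomb using 1
    ring
  -- integrability of f
  have hint : IntervalIntegrable f volume a b := by
    set d : ℝ := if b < z then z - b else a - z with hddef
    have hd : 0 < d := by
      rcases hz with h | h
      · rw [hddef, if_pos h]; linarith
      · rw [hddef]
        rcases lt_or_ge b z with h' | h'
        · rw [if_pos h']; linarith
        · rw [if_neg (not_lt.2 h')]; linarith
    have hdle : ∀ t ∈ Set.Icc a b, d ≤ |z - t| := by
      intro t ht
      rcases hz with h | h
      · rw [hddef, if_pos h, abs_of_pos (by linarith [ht.2] : (0:ℝ) < z - t)]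
        linarith [ht.2]
      · have hbz : ¬ b < z := by linarith
        rw [hddef, if_neg hbz, abs_of_neg (by linarith [ht.1] : z - t < 0)]
        linarith [ht.1]
    set g : ℝ → ℝ := fun t => (1 / d * Real.sqrt (b - a)) * (b - t) ^ (-(1/2) : ℝ) with hgdef
    have hg : IntervalIntegrable g volume a b := by
      have h0 : IntervalIntegrable (fun x : ℝ => x ^ (-(1/2) : ℝ)) volume 0 (b - a) :=
        intervalIntegrable_rpow' (by norm_num)
      have h1 := h0.comp_sub_left b
      simp only [sub_zero, sub_sub_cancel] at h1
      exact (h1.symm.const_mul _)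
    apply hg.mono_fun
    · apply Measurable.aestronglyMeasurable
      apply Measurable.mul
      · exact (measurable_const.div (measurable_const.sub measurable_id))
      · exact Real.continuous_sqrt.measurable.comp
          ((measurable_id.sub measurable_const).div (measurable_const.sub measurable_id))
    · rw [Filter.EventuallyLE, ae_restrict_iff' measurableSet_uIoc]
      apply Filter.Eventually.of_forall
      intro t ht
      rw [Set.uIoc_of_le hab.le] at ht
      have hta : a < t := ht.1
      have htb : t ≤ b := ht.2
      have hzt' : z - t ≠ 0 := hzt t ⟨hta.le, htb⟩
      have hbt : 0 ≤ b - t := by linarith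
      simp only [hfdef, hgdef, norm_mul, Real.norm_eq_abs]
      have h1 : |1 / (z - t)| ≤ 1 / d := by
        rw [abs_div, abs_one, div_le_div_iff₀ (abs_pos.2 hzt') hd]
        have := hdle t ⟨hta.le, htb⟩
        nlinarith [abs_nonneg (z - t)]
      have h2 : |Real.sqrt ((t - a) / (b - t))| ≤ Real.sqrt (b - a) * (b - t) ^ (-(1/2) : ℝ) := by
        rw [abs_of_nonneg (Real.sqrt_nonneg _)]
        rcases eq_or_lt_of_le htb with rfl | htb'
        · simp [Real.zero_rpow (by norm_num : (-(1/2) : ℝ) ≠ 0)]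
        · have hbt' : 0 < b - t := by linarith
          calc Real.sqrt ((t - a) / (b - t)) ≤ Real.sqrt ((b - a) / (b - t)) := by
                apply Real.sqrt_le_sqrt
                gcongr <;> linarith
          _ = Real.sqrt (b - a) / Real.sqrt (b - t) := by
                rw [Real.sqrt_div (by linarith : (0:ℝ) ≤ b - a)]
          _ = Real.sqrt (b - a) * (b - t) ^ (-(1/2) : ℝ) := by
                rw [Real.rpow_neg hbt'.le, div_eq_mul_inv, Real.sqrt_eq_rpow (b - t)]
      calc |1 / (z - t)| * |Real.sqrt ((t - a) / (b - t))|
          ≤ (1 / d) * (Real.sqrt (b - a) * (b - t) ^ (-(1/2) : ℝ)) := by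
            apply mul_le_mul h1 h2 (abs_nonneg _) (by positivity)
      _ = 1 / d * Real.sqrt (b - a) * (b - t) ^ (-(1/2) : ℝ) := by ring
      _ ≤ |1 / d| * |Real.sqrt (b - a)| * |(b - t) ^ (-(1/2) : ℝ)| := by
            rw [abs_of_nonneg (by positivity : (0:ℝ) ≤ 1 / d),
              abs_of_nonneg (Real.sqrt_nonneg (b - a)),
              abs_of_nonneg (Real.rpow_nonneg hbt _)]
  -- fundamental theorem of calculus
  have hFTC : (∫ t in a..b, f t) = (σ * Real.pi - Real.pi) - 0 :=
    intervalIntegral.integral_eq_sub_of_hasDerivAt_of_tendsto hab hderiv hint hFa hFb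
  rw [show (∫ t in a..b, (1 / (z - t)) * Real.sqrt ((t - a) / (b - t))) = ∫ t in a..b, f t from
    rfl, hFTC]
  field_simp [hσdef]
  ring
end

section
/- Let a < b be real numbers and let z be a real number with z > b or z < a. Then (1/π) · ∫_a^b (1/(z−t)) · √((b−t)/(t−a)) dt = 1 − √((z−b)/(z−a)), where all square roots are of positive real numbers. -/
open MeasureTheory intervalIntegral Set Filter Topology

/-- For `a < b` and `z` outside `[a, b]`,
`(1/π) ∫_a^b (1/(z−t)) √((b−t)/(t−a)) dt = 1 − √((z−b)/(z−a))`. -/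
theorem integral_inv_mul_sqrt_ratio' (a b z : ℝ) (hab : a < b) (hz : z > b ∨ z < a) :
    (1 / Real.pi) * (∫ t in a..b, (1 / (z - t)) * Real.sqrt ((b - t) / (t - a))) =
      1 - Real.sqrt ((z - b) / (z - a)) := by
  have hba : (0:ℝ) < b - a := by linarith
  have hza : z - a ≠ 0 := by rcases hz with h | h <;> intro h0 <;> nlinarith
  have hzb : z - b ≠ 0 := by rcases hz with h | h <;> intro h0 <;> nlinarith
  have hzt : ∀ t ∈ Icc a b, z - t ≠ 0 := by
    intro t ht; rcases hz with h | h
    · have := ht.2; intro h0; nlinarith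
    · have := ht.1; intro h0; nlinarith
  have hpos : 0 < (z - b) / (z - a) := by
    rcases hz with h | h
    · exact div_pos (by linarith) (by linarith)
    · apply div_pos_of_neg_of_neg <;> linarith
  set r : ℝ := Real.sqrt ((z - b) / (z - a)) with hrdef
  have hr : 0 < r := Real.sqrt_pos.mpr hpos
  have hr2 : r ^ 2 = (z - b) / (z - a) := Real.sq_sqrt hpos.le
  set F : ℝ → ℝ := fun t =>
    2 * r * Real.arctan (Real.sqrt ((b - t) / (t - a)) / r)
      - 2 * Real.arctan (Real.sqrt ((b - t) / (t - a))) with hF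
  -- derivative of F on (a, b)
  have hderiv : ∀ t ∈ Ioo a b,
      HasDerivAt F ((1 / (z - t)) * Real.sqrt ((b - t) / (t - a))) t := by
    intro t ht
    obtain ⟨hta, htb⟩ := ht
    have hta' : (0:ℝ) < t - a := by linarith
    have hbt : (0:ℝ) < b - t := by linarith
    have hw : 0 < (b - t) / (t - a) := div_pos hbt hta'
    have hztne : z - t ≠ 0 := hzt t ⟨hta.le, htb.le⟩
    set s : ℝ := Real.sqrt ((b - t) / (t - a)) with hs
    have hs0 : 0 < s := Real.sqrt_pos.mpr hw
    have hs2 : s ^ 2 = (b - t) / (t - a) := Real.sq_sqrt hw.le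
    have hsne : s ≠ 0 := ne_of_gt hs0
    have hwD : HasDerivAt (fun u => (b - u) / (u - a)) ((a - b) / (t - a) ^ 2) t := by
      have h1 : HasDerivAt (fun u : ℝ => b - u) (-1) t := (hasDerivAt_id t).const_sub b
      have h2 : HasDerivAt (fun u : ℝ => u - a) 1 t := (hasDerivAt_id t).sub_const a
      have : HasDerivAt (fun u : ℝ => (b - u) / (u - a)) _ t := h1.div h2 (ne_of_gt hta')
      convert this using 1
      field_simp
      ring
    have hsD : HasDerivAt (fun u => Real.sqrt ((b - u) / (u - a)))
        (1 / (2 * s) * ((a - b) / (t - a) ^ 2)) t := by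
      have := (Real.hasDerivAt_sqrt (ne_of_gt hw)).comp t hwD
      simpa [hs, Function.comp_def] using this
    have h1 : HasDerivAt (fun u => Real.arctan (Real.sqrt ((b - u) / (u - a))))
        ((1 / (1 + s ^ 2)) * (1 / (2 * s) * ((a - b) / (t - a) ^ 2))) t := by
      have := (Real.hasDerivAt_arctan s).comp t hsD
      simpa [Function.comp_def] using this
    have h2 : HasDerivAt (fun u => Real.arctan (Real.sqrt ((b - u) / (u - a)) / r))
        ((1 / (1 + (s / r) ^ 2)) * ((1 / (2 * s) * ((a - b) / (t - a) ^ 2)) / r)) t := by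
      have := (Real.hasDerivAt_arctan (s / r)).comp t (hsD.div_const r)
      simpa [Function.comp_def] using this
    have hD : HasDerivAt F _ t := (h2.const_mul (2 * r)).sub (h1.const_mul 2)
    convert hD using 1
    have e1 : 1 + s ^ 2 = (b - a) / (t - a) := by
      rw [hs2]; field_simp; ring
    have e2 : 1 + (s / r) ^ 2 = ((b - a) * (z - t)) / ((z - b) * (t - a)) := by
      rw [div_pow, hs2, hr2]
      field_simp
      ring
    have hss' : s ^ 2 * (t - a) = b - t := by
      rw [hs2]; field_simp
    rw [e1, e2]
    have e3 : 2 * r * (1 / ((b - a) * (z - t) / ((z - b) * (t - a))) *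
          (1 / (2 * s) * ((a - b) / (t - a) ^ 2) / r)) -
          2 * (1 / ((b - a) / (t - a)) * (1 / (2 * s) * ((a - b) / (t - a) ^ 2)))
        = (b - t) / (s * ((t - a) * (z - t))) := by
      field_simp
      ring
    rw [e3]
    field_simp
    linear_combination hss'
  -- integrability of the integrand
  have hint : IntervalIntegrable (fun t => (1 / (z - t)) * Real.sqrt ((b - t) / (t - a)))
      volume a b := by
    obtain ⟨δ, hδ, hδle⟩ : ∃ δ > 0, ∀ t ∈ Ioc a b, δ ≤ |z - t| := by
      rcases hz with h | h
      · exact ⟨z - b, by linarith, fun t ht => by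
          rw [abs_of_pos (by linarith [ht.2])]; linarith [ht.2]⟩
      · exact ⟨a - z, by linarith, fun t ht => by
          rw [abs_of_neg (by linarith [ht.1])]; linarith [ht.1]⟩
    have hg : IntervalIntegrable
        (fun t => (1 / δ * Real.sqrt (b - a)) * (t - a) ^ (-(1/2) : ℝ)) volume a b := by
      have h0 : IntervalIntegrable (fun x : ℝ => x ^ (-(1/2) : ℝ)) volume 0 (b - a) :=
        intervalIntegrable_rpow' (by norm_num)
      have h1 := (h0.comp_sub_right a).const_mul (1 / δ * Real.sqrt (b - a))
      simpa using h1
    apply hg.mono_fun'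
    · apply Measurable.aestronglyMeasurable
      exact ((measurable_const.div (measurable_const.sub measurable_id)).mul
        (Real.continuous_sqrt.measurable.comp
          ((measurable_const.sub measurable_id).div (measurable_id.sub measurable_const))))
    · rw [Filter.EventuallyLE, ae_restrict_iff' measurableSet_uIoc]
      apply Filter.Eventually.of_forall
      intro t ht
      rw [uIoc_of_le hab.le] at ht
      have hta' : (0:ℝ) < t - a := by linarith [ht.1]
      have hbt : (0:ℝ) ≤ b - t := by linarith [ht.2]
      simp only [norm_mul, Real.norm_eq_abs]
      rw [abs_of_nonneg (Real.sqrt_nonneg _)]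
      have hb1 : |1 / (z - t)| ≤ 1 / δ := by
        rw [abs_div, abs_one]
        exact one_div_le_one_div_of_le hδ (hδle t ht)
      have hrw : (t - a) ^ (-(1/2) : ℝ) = (Real.sqrt (t - a))⁻¹ := by
        rw [Real.sqrt_eq_rpow, ← Real.rpow_neg hta'.le]
      have hb2 : Real.sqrt ((b - t) / (t - a))
          ≤ Real.sqrt (b - a) * (t - a) ^ (-(1/2) : ℝ) := by
        rw [hrw, Real.sqrt_div hbt, div_eq_mul_inv]
        gcongr
        linarith [ht.1]
      calc |1 / (z - t)| * Real.sqrt ((b - t) / (t - a))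
          ≤ (1 / δ) * (Real.sqrt (b - a) * (t - a) ^ (-(1/2) : ℝ)) :=
            mul_le_mul hb1 hb2 (Real.sqrt_nonneg _) (by positivity)
        _ = 1 / δ * Real.sqrt (b - a) * (t - a) ^ (-(1/2) : ℝ) := by ring
  -- limit at b from the left
  have hsb : Tendsto (fun t => Real.sqrt ((b - t) / (t - a))) (𝓝[<] b) (𝓝 0) := by
    have hc : ContinuousAt (fun u => Real.sqrt ((b - u) / (u - a))) b := by
      apply Real.continuous_sqrt.continuousAt.comp
      exact (continuousAt_const.sub continuousAt_id).div
        (continuousAt_id.sub continuousAt_const) (by simpa using sub_ne_zero.mpr hab.ne')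
    have h := hc.continuousWithinAt (s := Iio b)
    simpa using h.tendsto
  have hFb : Tendsto F (𝓝[<] b) (𝓝 0) := by
    have h1 : Tendsto (fun t => Real.arctan (Real.sqrt ((b - t) / (t - a)) / r))
        (𝓝[<] b) (𝓝 (Real.arctan (0 / r))) :=
      (Real.continuous_arctan.tendsto _).comp (hsb.div_const r)
    have h2 : Tendsto (fun t => Real.arctan (Real.sqrt ((b - t) / (t - a))))
        (𝓝[<] b) (𝓝 (Real.arctan 0)) :=
      (Real.continuous_arctan.tendsto _).comp hsb
    have h := (h1.const_mul (2 * r)).sub (h2.const_mul 2)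
    simpa using h
  -- limit at a from the right
  have hsa : Tendsto (fun t => Real.sqrt ((b - t) / (t - a))) (𝓝[>] a) atTop := by
    have h1 : Tendsto (fun t => (b - t) / (t - a)) (𝓝[>] a) atTop := by
      have hnum : Tendsto (fun t : ℝ => b - t) (𝓝[>] a) (𝓝 (b - a)) :=
        ((continuous_const.sub continuous_id).tendsto a).mono_left nhdsWithin_le_nhds
      have hden0 : Tendsto (fun t : ℝ => t - a) (𝓝[>] a) (𝓝[>] 0) := by
        apply tendsto_nhdsWithin_of_tendsto_nhds_of_eventually_within
        · have hh : Tendsto (fun t : ℝ => t - a) (𝓝[>] a) (𝓝 (a - a)) :=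
            ((continuous_id.sub continuous_const).tendsto a).mono_left nhdsWithin_le_nhds
          simpa using hh
        · filter_upwards [self_mem_nhdsWithin] with t ht
          exact sub_pos.mpr (Set.mem_Ioi.mp ht)
      have hden : Tendsto (fun t : ℝ => (t - a)⁻¹) (𝓝[>] a) atTop :=
        tendsto_inv_nhdsGT_zero.comp hden0
      have h := hnum.pos_mul_atTop hba hden
      simpa [div_eq_mul_inv] using h
    have hsq : Tendsto Real.sqrt atTop atTop := by
      refine (tendsto_rpow_atTop (by norm_num : (0:ℝ) < 1/2)).congr (fun x => ?_)
      exact (Real.sqrt_eq_rpow x).symm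
    exact hsq.comp h1
  have hFa : Tendsto F (𝓝[>] a) (𝓝 (r * Real.pi - Real.pi)) := by
    have harct : Tendsto Real.arctan atTop (𝓝 (Real.pi / 2)) :=
      Real.tendsto_arctan_atTop.mono_right nhdsWithin_le_nhds
    have h1 : Tendsto (fun t => Real.arctan (Real.sqrt ((b - t) / (t - a)) / r))
        (𝓝[>] a) (𝓝 (Real.pi / 2)) :=
      harct.comp (hsa.atTop_div_const hr)
    have h2 : Tendsto (fun t => Real.arctan (Real.sqrt ((b - t) / (t - a))))
        (𝓝[>] a) (𝓝 (Real.pi / 2)) := harct.comp hsa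
    have h := (h1.const_mul (2 * r)).sub (h2.const_mul 2)
    have heq : 2 * r * (Real.pi / 2) - 2 * (Real.pi / 2) = r * Real.pi - Real.pi := by ring
    rw [← heq]
    exact h
  have key : (∫ t in a..b, (1 / (z - t)) * Real.sqrt ((b - t) / (t - a)))
      = 0 - (r * Real.pi - Real.pi) :=
    intervalIntegral.integral_eq_sub_of_hasDerivAt_of_tendsto hab hderiv hint hFa hFb
  rw [key]
  have hπ : Real.pi ≠ 0 := Real.pi_ne_zero
  field_simp
  ring
end

section
/- Let a < b be real numbers and let z be a real number with z > b. Then (1/π) · ∫_a^b √((b−x)(x−a))/(z−x) dx = z − (a+b)/2 − √((z−a)(z−b)). -/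
open MeasureTheory intervalIntegral

set_option maxHeartbeats 1600000

/-- For `a < b` and `z > b`,
`(1/π) ∫_a^b √((b−x)(x−a))/(z−x) dx = z − (a+b)/2 − √((z−a)(z−b))`. -/
theorem integral_sqrt_mul_div (a b z : ℝ) (hab : a < b) (hz : b < z) :
    (1 / Real.pi) * (∫ x in a..b, Real.sqrt ((b - x) * (x - a)) / (z - x)) =
      z - (a + b) / 2 - Real.sqrt ((z - a) * (z - b)) := by
  have hba : b - a ≠ 0 := by linarith
  set m : ℝ := (a + b) / 2 with hm
  set d : ℝ := (b - a) / 2 with hdd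
  have hd : 0 < d := by rw [hdd]; linarith
  have hd' : d ≠ 0 := ne_of_gt hd
  have hD : 0 < (z - a) * (z - b) := mul_pos (by linarith) (by linarith)
  set r : ℝ := Real.sqrt ((z - a) * (z - b)) with hrdef
  have hr : r ^ 2 = (z - a) * (z - b) := Real.sq_sqrt hD.le
  have hrpos : 0 < r := Real.sqrt_pos.mpr hD
  have hr' : r ≠ 0 := ne_of_gt hrpos
  clear_value r
  clear_value m
  clear_value d
  set F : ℝ → ℝ := fun x =>
    (z - m) * Real.arcsin ((x - m) / d) - Real.sqrt ((b - x) * (x - a))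
      + r * Real.arcsin ((d ^ 2 - (z - m) * (x - m)) / (d * (z - x))) with hF
  clear_value F
  have hden : ∀ x ∈ Set.Icc a b, d * (z - x) ≠ 0 := by
    intro x hx
    have : 0 < z - x := by linarith [hx.2]
    positivity
  have key : (∫ x in a..b, Real.sqrt ((b - x) * (x - a)) / (z - x)) = F b - F a := by
    apply intervalIntegral.integral_eq_sub_of_hasDeriv_right_of_le hab.le
    · -- continuity of F on Icc
      rw [hF]
      apply ContinuousOn.add
      · apply ContinuousOn.sub
        · exact continuousOn_const.mul
            (Real.continuous_arcsin.comp (by continuity)).continuousOn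
        · exact (Real.continuous_sqrt.comp (by continuity)).continuousOn
      · apply ContinuousOn.mul continuousOn_const
        apply Real.continuous_arcsin.comp_continuousOn
        exact ContinuousOn.div
          (continuous_const.sub (continuous_const.mul
            (continuous_id.sub continuous_const))).continuousOn
          (continuous_const.mul (continuous_const.sub continuous_id)).continuousOn hden
    · -- derivative on Ioo
      intro x hx
      obtain ⟨hx1, hx2⟩ := hx
      have hzx : 0 < z - x := by linarith
      have hzx' : z - x ≠ 0 := ne_of_gt hzx
      have hs2 : 0 < (b - x) * (x - a) := mul_pos (by linarith) (by linarith)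
      set s : ℝ := Real.sqrt ((b - x) * (x - a)) with hsdef
      have hs : s ^ 2 = (b - x) * (x - a) := Real.sq_sqrt hs2.le
      have hspos : 0 < s := Real.sqrt_pos.mpr hs2
      have hs' : s ≠ 0 := ne_of_gt hspos
      clear_value s
      -- u bounds
      have hu1 : (x - m) / d ≠ -1 := by
        have : -1 < (x - m) / d := by
          rw [lt_div_iff₀ hd, hm, hdd]; linarith
        linarith
      have hu2 : (x - m) / d ≠ 1 := by
        have : (x - m) / d < 1 := by
          rw [div_lt_one hd, hm, hdd]; linarith
        linarith
      -- arg bounds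
      have hdz : 0 < d * (z - x) := mul_pos hd hzx
      have harg1 : (d ^ 2 - (z - m) * (x - m)) / (d * (z - x)) ≠ -1 := by
        have : -1 < (d ^ 2 - (z - m) * (x - m)) / (d * (z - x)) := by
          rw [lt_div_iff₀ hdz, hm, hdd]
          nlinarith [mul_pos (show (0:ℝ) < z - a by linarith)
            (show (0:ℝ) < b - x by linarith)]
        linarith
      have harg2 : (d ^ 2 - (z - m) * (x - m)) / (d * (z - x)) ≠ 1 := by
        have : (d ^ 2 - (z - m) * (x - m)) / (d * (z - x)) < 1 := by
          rw [div_lt_one hdz, hm, hdd]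
          nlinarith [mul_pos (show (0:ℝ) < z - b by linarith)
            (show (0:ℝ) < x - a by linarith)]
        linarith
      -- sqrt simplifications
      have hsq1 : Real.sqrt (1 - ((x - m) / d) ^ 2) = s / d := by
        have h1 : 1 - ((x - m) / d) ^ 2 = ((b - x) * (x - a)) / d ^ 2 := by
          rw [hm, hdd]; field_simp; ring
        rw [h1, Real.sqrt_div hs2.le, Real.sqrt_sq hd.le, hsdef]
      have hsq2 : Real.sqrt (1 - ((d ^ 2 - (z - m) * (x - m)) / (d * (z - x))) ^ 2)
          = r * s / (d * (z - x)) := by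
        have h1 : 1 - ((d ^ 2 - (z - m) * (x - m)) / (d * (z - x))) ^ 2
            = ((z - a) * (z - b) * ((b - x) * (x - a))) / (d * (z - x)) ^ 2 := by
          rw [hm, hdd]; field_simp; ring
        rw [h1, Real.sqrt_div (by positivity), Real.sqrt_sq hdz.le,
          Real.sqrt_mul hD.le, ← hrdef, ← hsdef]
      -- build derivative
      have hinner1 : HasDerivAt (fun x : ℝ => (x - m) / d) (1 / d) x := by
        have := ((hasDerivAt_id x).sub_const m).div_const d
        simpa using this
      have harc1 : HasDerivAt (fun x : ℝ => Real.arcsin ((x - m) / d))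
          (1 / Real.sqrt (1 - ((x - m) / d) ^ 2) * (1 / d)) x :=
        HasDerivAt.comp (h₂ := Real.arcsin) x (Real.hasDerivAt_arcsin hu1 hu2) hinner1
      have hp : HasDerivAt (fun x : ℝ => (b - x) * (x - a)) (a + b - 2 * x) x := by
        have := ((hasDerivAt_id x).const_sub b).mul ((hasDerivAt_id x).sub_const a)
        simp only [id_eq] at this
        exact this.congr_deriv (by ring)
      have hsqrt : HasDerivAt (fun x : ℝ => Real.sqrt ((b - x) * (x - a)))
          (1 / (2 * s) * (a + b - 2 * x)) x := by
        have := (Real.hasDerivAt_sqrt (ne_of_gt hs2)).comp x hp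
        simpa [← hsdef, Function.comp_def] using this
      have hN : HasDerivAt (fun x : ℝ => d ^ 2 - (z - m) * (x - m)) (-(z - m)) x := by
        have := (((hasDerivAt_id x).sub_const m).const_mul (z - m)).const_sub (d ^ 2)
        simp only [id_eq] at this
        exact this.congr_deriv (by ring)
      have hDen : HasDerivAt (fun x : ℝ => d * (z - x)) (-d) x := by
        have := ((hasDerivAt_id x).const_sub z).const_mul d
        simp only [id_eq] at this
        exact this.congr_deriv (by ring)
      have hargder : HasDerivAt (fun x : ℝ => (d ^ 2 - (z - m) * (x - m)) / (d * (z - x)))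
          ((-(z - m) * (d * (z - x)) - (d ^ 2 - (z - m) * (x - m)) * (-d)) / (d * (z - x)) ^ 2)
          x := hN.div hDen (ne_of_gt hdz)
      have harc2 : HasDerivAt (fun x : ℝ =>
          Real.arcsin ((d ^ 2 - (z - m) * (x - m)) / (d * (z - x))))
          (1 / Real.sqrt (1 - ((d ^ 2 - (z - m) * (x - m)) / (d * (z - x))) ^ 2)
            * ((-(z - m) * (d * (z - x)) - (d ^ 2 - (z - m) * (x - m)) * (-d))
              / (d * (z - x)) ^ 2)) x :=
        HasDerivAt.comp (h₂ := Real.arcsin) x (Real.hasDerivAt_arcsin harg1 harg2) hargder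
      have hFder : HasDerivAt (fun x : ℝ =>
          (z - m) * Real.arcsin ((x - m) / d) - Real.sqrt ((b - x) * (x - a))
            + r * Real.arcsin ((d ^ 2 - (z - m) * (x - m)) / (d * (z - x))))
          ((z - m) * (1 / Real.sqrt (1 - ((x - m) / d) ^ 2) * (1 / d))
            - 1 / (2 * s) * (a + b - 2 * x)
            + r * (1 / Real.sqrt (1 - ((d ^ 2 - (z - m) * (x - m)) / (d * (z - x))) ^ 2)
              * ((-(z - m) * (d * (z - x)) - (d ^ 2 - (z - m) * (x - m)) * (-d))
                / (d * (z - x)) ^ 2))) x :=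
        ((harc1.const_mul (z - m)).sub hsqrt).add (harc2.const_mul r)
      have heq : (z - m) * (1 / Real.sqrt (1 - ((x - m) / d) ^ 2) * (1 / d))
            - 1 / (2 * s) * (a + b - 2 * x)
            + r * (1 / Real.sqrt (1 - ((d ^ 2 - (z - m) * (x - m)) / (d * (z - x))) ^ 2)
              * ((-(z - m) * (d * (z - x)) - (d ^ 2 - (z - m) * (x - m)) * (-d))
                / (d * (z - x)) ^ 2))
          = s / (z - x) := by
        rw [hsq1, hsq2]
        have e1 : (z - m) * (1 / (s / d) * (1 / d)) = (z - m) / s := by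
          field_simp
          try ring
        have e3 : r * (1 / (r * s / (d * (z - x)))
              * ((-(z - m) * (d * (z - x)) - (d ^ 2 - (z - m) * (x - m)) * (-d))
                / (d * (z - x)) ^ 2)) = -((z - m) ^ 2 - d ^ 2) / (s * (z - x)) := by
          have hnum : (-(z - m) * (d * (z - x)) - (d ^ 2 - (z - m) * (x - m)) * (-d))
              = -(d * ((z - m) ^ 2 - d ^ 2)) := by ring
          rw [hnum]
          field_simp
          try ring
        rw [e1, e3]
        have hDval : (z - m) ^ 2 - d ^ 2 = (z - a) * (z - b) := by rw [hm, hdd]; ring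
        rw [hDval]
        field_simp
        linear_combination (-2) * hs + (-2 * (z - x)) * hm
      rw [heq] at hFder
      rw [hF]
      exact hFder.hasDerivWithinAt
    · -- integrability
      apply ContinuousOn.intervalIntegrable
      rw [Set.uIcc_of_le hab.le]
      apply ContinuousOn.div
      · exact (Real.continuous_sqrt.comp ((continuous_const.sub continuous_id).mul
          (continuous_id.sub continuous_const))).continuousOn
      · exact (continuous_const.sub continuous_id).continuousOn
      · intro x hx
        have : 0 < z - x := by linarith [hx.2]
        exact ne_of_gt this
  rw [key]
  -- evaluate F b - F a
  have hb1 : (b - m) / d = 1 := by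
    rw [hm, hdd]; field_simp; ring
  have ha1 : (a - m) / d = -1 := by
    rw [hm, hdd]; field_simp; ring
  have hb2 : (d ^ 2 - (z - m) * (b - m)) / (d * (z - b)) = -1 := by
    rw [hm, hdd]
    rw [div_eq_iff (ne_of_gt (mul_pos (by linarith : (0:ℝ) < (b - a) / 2)
      (by linarith : (0:ℝ) < z - b)))]
    ring
  have ha2 : (d ^ 2 - (z - m) * (a - m)) / (d * (z - a)) = 1 := by
    rw [hm, hdd]
    rw [div_eq_iff (ne_of_gt (mul_pos (by linarith : (0:ℝ) < (b - a) / 2)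
      (by linarith : (0:ℝ) < z - a)))]
    ring
  have hFb : F b = (z - m) * (Real.pi / 2) + r * (-(Real.pi / 2)) := by
    simp only [hF, hb1, hb2, Real.arcsin_one, Real.arcsin_neg_one, sub_self, zero_mul,
      Real.sqrt_zero]
    ring
  have hFa : F a = (z - m) * (-(Real.pi / 2)) + r * (Real.pi / 2) := by
    simp only [hF, ha1, ha2, Real.arcsin_one, Real.arcsin_neg_one, sub_self, mul_zero,
      Real.sqrt_zero]
    ring
  rw [hFb, hFa, hm]
  have hpi : Real.pi ≠ 0 := Real.pi_ne_zero
  field_simp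
  ring
end

section
/- Let Q be as in the context. Then for every real number a there exists a unique real number b > a such that ψ(a,b) = 0. -/
open MeasureTheory intervalIntegral

/-- `φ(a,b) = ∫₀¹ Q'((1−t)b + t·a)/√(t(1−t)) dt`. -/
noncomputable def phi (Q : Polynomial ℝ) (a b : ℝ) : ℝ :=
  ∫ t in (0:ℝ)..1, Q.derivative.eval ((1 - t) * b + t * a) / Real.sqrt (t * (1 - t))

/-- `ψ(a,b) = (b−a)·∫₀¹ Q'((1−t)b + t·a)·√((1−t)/t) dt − 2π`. -/
noncomputable def psi (Q : Polynomial ℝ) (a b : ℝ) : ℝ :=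
  (b - a) * (∫ t in (0:ℝ)..1, Q.derivative.eval ((1 - t) * b + t * a) * Real.sqrt ((1 - t) / t))
    - 2 * Real.pi

private lemma sqrtw_meas : Measurable fun t : ℝ => Real.sqrt ((1 - t) / t) :=
  Real.continuous_sqrt.measurable.comp ((measurable_const.sub measurable_id).div measurable_id)

private lemma sqrtw_le_rpow {t : ℝ} (ht : t ∈ Set.Ioc (0:ℝ) 1) :
    Real.sqrt ((1 - t) / t) ≤ t ^ (-(1/2) : ℝ) := by
  have h1 : (1 - t) / t ≤ 1 / t :=
    (div_le_div_iff_of_pos_right ht.1).mpr (by linarith [ht.1])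
  calc Real.sqrt ((1 - t) / t) ≤ Real.sqrt (1 / t) := Real.sqrt_le_sqrt h1
    _ = t ^ (-(1/2) : ℝ) := by
        rw [one_div, Real.sqrt_inv, Real.sqrt_eq_rpow, Real.rpow_neg ht.1.le]

private lemma intInt_mul_w (f : ℝ → ℝ) (hf : Continuous f) :
    IntervalIntegrable (fun t => f t * Real.sqrt ((1 - t) / t)) volume 0 1 := by
  obtain ⟨C, hC⟩ :=
    (isCompact_Icc (a := (0:ℝ)) (b := 1)).exists_bound_of_continuousOn hf.continuousOn
  have hC0 : 0 ≤ C := le_trans (norm_nonneg _) (hC 0 (by constructor <;> norm_num))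
  apply IntervalIntegrable.mono_fun'
    ((intervalIntegrable_rpow' (by norm_num : (-1:ℝ) < -(1/2))).const_mul C)
  · exact (hf.measurable.mul sqrtw_meas).aestronglyMeasurable
  · rw [Set.uIoc_of_le (by norm_num : (0:ℝ) ≤ 1)]
    filter_upwards [ae_restrict_mem (measurableSet_Ioc (a := (0:ℝ)) (b := 1))] with t ht
    have hC' := hC t (Set.Ioc_subset_Icc_self ht)
    have hw := sqrtw_le_rpow ht
    have hnn := Real.sqrt_nonneg ((1 - t) / t)
    simp only [norm_mul, Real.norm_of_nonneg hnn]
    exact mul_le_mul hC' hw hnn hC0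

set_option maxHeartbeats 2000000 in
/-- For every real `a` there is a unique `b > a` with `ψ(a,b) = 0`. -/
theorem exists_unique_root_psi (Q : Polynomial ℝ) (m : ℕ) (hm : 1 ≤ m)
    (hdeg : Q.natDegree = 2 * m) (hlead : 0 < Q.leadingCoeff)
    (hconv : ∀ x : ℝ, 0 ≤ Q.derivative.derivative.eval x) :
    ∀ a : ℝ, ∃! b : ℝ, a < b ∧ psi Q a b = 0 := by
  intro a
  have hDc : Continuous fun x : ℝ => Q.derivative.eval x := Q.derivative.continuous
  have hmono : Monotone fun x : ℝ => Q.derivative.eval x := by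
    apply monotone_of_deriv_nonneg Q.derivative.differentiable
    intro x
    rw [Polynomial.deriv]
    exact hconv x
  set G : ℝ → ℝ := fun b =>
    ∫ t in (0:ℝ)..1, Q.derivative.eval ((1 - t) * b + t * a) * Real.sqrt ((1 - t) / t)
    with hGdef
  have hψdef : ∀ b, psi Q a b = (b - a) * G b - 2 * Real.pi := fun b => rfl
  have hGint : ∀ b : ℝ, IntervalIntegrable
      (fun t => Q.derivative.eval ((1 - t) * b + t * a) * Real.sqrt ((1 - t) / t)) volume 0 1 := by
    intro b
    exact intInt_mul_w _ (hDc.comp (by continuity))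
  -- monotonicity of G
  have hGmono : ∀ b1 b2 : ℝ, b1 ≤ b2 → G b1 ≤ G b2 := by
    intro b1 b2 h
    apply intervalIntegral.integral_mono_on (by norm_num) (hGint b1) (hGint b2)
    intro t ht
    apply mul_le_mul_of_nonneg_right _ (Real.sqrt_nonneg _)
    apply hmono
    nlinarith [mul_nonneg (by linarith [ht.2] : (0:ℝ) ≤ 1 - t) (by linarith : (0:ℝ) ≤ b2 - b1)]
  -- continuity of G
  have hGcont : Continuous G := by
    rw [continuous_iff_continuousAt]
    intro x₀
    set L := min a (x₀ - 1) with hL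
    set U := max a (x₀ + 1) with hU
    obtain ⟨C, hC⟩ := (isCompact_Icc (a := L) (b := U)).exists_bound_of_continuousOn
      hDc.continuousOn
    have hC0 : 0 ≤ C := le_trans (norm_nonneg _)
      (hC a ⟨min_le_left _ _, le_max_left _ _⟩)
    apply intervalIntegral.continuousAt_of_dominated_interval
      (bound := fun t => C * t ^ (-(1/2) : ℝ))
    · apply Filter.Eventually.of_forall
      intro x
      exact ((hDc.comp (by continuity)).measurable.mul sqrtw_meas).aestronglyMeasurable
    · have hmem : Set.Icc (x₀ - 1) (x₀ + 1) ∈ nhds x₀ := Icc_mem_nhds (by linarith) (by linarith)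
      filter_upwards [hmem] with x hx
      apply ae_of_all
      intro t ht
      rw [Set.uIoc_of_le (by norm_num : (0:ℝ) ≤ 1)] at ht
      have hxL : L ≤ x := le_trans (min_le_right _ _) hx.1
      have haL : L ≤ a := min_le_left _ _
      have hxU : x ≤ U := le_trans hx.2 (le_max_right _ _)
      have haU : a ≤ U := le_max_left _ _
      have harg : (1 - t) * x + t * a ∈ Set.Icc L U := by
        constructor
        · nlinarith [mul_nonneg (by linarith [ht.2] : (0:ℝ) ≤ 1 - t)
            (by linarith : (0:ℝ) ≤ x - L), mul_nonneg ht.1.le (by linarith : (0:ℝ) ≤ a - L)]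
        · nlinarith [mul_nonneg (by linarith [ht.2] : (0:ℝ) ≤ 1 - t)
            (by linarith : (0:ℝ) ≤ U - x), mul_nonneg ht.1.le (by linarith : (0:ℝ) ≤ U - a)]
      have hnn := Real.sqrt_nonneg ((1 - t) / t)
      rw [norm_mul, Real.norm_of_nonneg hnn]
      exact mul_le_mul (hC _ harg) (sqrtw_le_rpow ht) hnn hC0
    · exact (intervalIntegrable_rpow' (by norm_num : (-1:ℝ) < -(1/2))).const_mul C
    · apply ae_of_all
      intro t _
      exact ((hDc.comp (by continuity)).mul continuous_const).continuousAt
  have hψcont : Continuous fun b => psi Q a b := by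
    simp only [hψdef]
    exact ((continuous_id.sub continuous_const).mul hGcont).sub continuous_const
  -- key monotonicity lemma at positive level
  have key : ∀ u v : ℝ, a < u → psi Q a u = 0 → u < v → 0 < psi Q a v := by
    intro u v hu h0 huv
    have h0' : (u - a) * G u = 2 * Real.pi := by
      have := h0
      rw [hψdef] at this
      linarith
    have hGu : 0 < G u := by nlinarith [Real.pi_pos]
    have hm' : G u ≤ G v := hGmono u v huv.le
    rw [hψdef]
    nlinarith [mul_le_mul_of_nonneg_left hm' (by linarith : (0:ℝ) ≤ v - a),
      mul_pos (by linarith : (0:ℝ) < v - u) hGu]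
  -- small b : ψ < 0
  obtain ⟨C₁, hC₁⟩ := (isCompact_Icc (a := a) (b := a + 1)).exists_bound_of_continuousOn
    hDc.continuousOn
  have hC₁0 : 0 ≤ C₁ := le_trans (norm_nonneg _) (hC₁ a ⟨le_refl a, by linarith⟩)
  set ε := min 1 (Real.pi / (C₁ + 1)) with hε
  have hε0 : 0 < ε := lt_min one_pos (div_pos Real.pi_pos (by linarith))
  have hε1 : ε ≤ 1 := min_le_left _ _
  have hε2 : ε * (C₁ + 1) ≤ Real.pi := by
    have := min_le_right 1 (Real.pi / (C₁ + 1))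
    rw [le_div_iff₀ (by linarith : (0:ℝ) < C₁ + 1)] at this
    exact this
  set b₀ := a + ε with hb₀def
  have hb₀ : a < b₀ := by simp only [hb₀def]; linarith
  have hGb₀ : G b₀ ≤ C₁ * 2 := by
    have hle : G b₀ ≤ ∫ t in (0:ℝ)..1, C₁ * t ^ (-(1/2) : ℝ) := by
      apply intervalIntegral.integral_mono_on (by norm_num) (hGint b₀)
        ((intervalIntegrable_rpow' (by norm_num : (-1:ℝ) < -(1/2))).const_mul C₁)
      intro t ht
      rcases eq_or_lt_of_le ht.1 with h0 | h0
      · rw [← h0]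
        simp [Real.zero_rpow (by norm_num : (-(1/2) : ℝ) ≠ 0)]
      · have harg : (1 - t) * b₀ + t * a ∈ Set.Icc a (a + 1) := by
          constructor
          · simp only [hb₀def]
            nlinarith [mul_nonneg (by linarith [ht.2] : (0:ℝ) ≤ 1 - t) hε0.le]
          · simp only [hb₀def]
            nlinarith [mul_nonneg ht.1 (by linarith : (0:ℝ) ≤ 1 - ε),
              mul_nonneg ht.1 hε0.le]
        have hCx := hC₁ _ harg
        rw [Real.norm_eq_abs] at hCx
        have hnn := Real.sqrt_nonneg ((1 - t) / t)
        calc Q.derivative.eval ((1 - t) * b₀ + t * a) * Real.sqrt ((1 - t) / t)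
            ≤ |Q.derivative.eval ((1 - t) * b₀ + t * a)| * Real.sqrt ((1 - t) / t) :=
              mul_le_mul_of_nonneg_right (le_abs_self _) hnn
          _ ≤ C₁ * t ^ (-(1/2) : ℝ) :=
              mul_le_mul hCx (sqrtw_le_rpow ⟨h0, ht.2⟩) hnn hC₁0
    have hval : (∫ t in (0:ℝ)..1, C₁ * t ^ (-(1/2) : ℝ)) = C₁ * 2 := by
      rw [intervalIntegral.integral_const_mul, integral_rpow (Or.inl (by norm_num))]
      rw [Real.one_rpow, Real.zero_rpow (by norm_num : (-(1/2) : ℝ) + 1 ≠ 0)]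
      norm_num
    linarith [hle, hval.le, hval.ge]
  have hψb₀ : psi Q a b₀ < 0 := by
    rw [hψdef]
    have hb₀a : b₀ - a = ε := by simp [hb₀def]
    rw [hb₀a]
    nlinarith [mul_le_mul_of_nonneg_left hGb₀ hε0.le, Real.pi_pos]
  -- large b : ψ > 0
  have hd2 : ((2 * m - 1 : ℕ) : ℝ) + 1 = ((2 * m : ℕ) : ℝ) := by
    rw [Nat.cast_sub (by omega)]
    push_cast
    ring
  have hd1 : Q.derivative.coeff (2 * m - 1) = Q.leadingCoeff * ((2 * m : ℕ) : ℝ) := by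
    have h := Polynomial.coeff_derivative Q (2 * m - 1)
    rw [show 2 * m - 1 + 1 = 2 * m by omega] at h
    rw [h, ← hdeg, Polynomial.coeff_natDegree, hdeg, hd2]
  have hdpos : 0 < Q.derivative.coeff (2 * m - 1) := by
    rw [hd1]
    have : (0:ℝ) < ((2 * m : ℕ) : ℝ) := by exact_mod_cast (by omega : 0 < 2 * m)
    exact mul_pos hlead this
  have hnd : Q.derivative.natDegree = 2 * m - 1 := by
    apply le_antisymm
    · calc Q.derivative.natDegree ≤ Q.natDegree - 1 := Polynomial.natDegree_derivative_le Q
        _ = 2 * m - 1 := by rw [hdeg]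
    · exact Polynomial.le_natDegree_of_ne_zero hdpos.ne'
  have hlc : 0 < Q.derivative.leadingCoeff := by
    rw [Polynomial.leadingCoeff, hnd]
    exact hdpos
  have hdegpos : 0 < Q.derivative.degree := by
    rw [← Polynomial.natDegree_pos_iff_degree_pos, hnd]
    omega
  have htop : Filter.Tendsto (fun x => Polynomial.eval x Q.derivative) Filter.atTop Filter.atTop :=
    Polynomial.tendsto_atTop_of_leadingCoeff_nonneg Q.derivative hdegpos hlc.le
  set M := 2 + 4 * Real.pi + 2 * |Q.derivative.eval a| with hM
  obtain ⟨x₀, hx₀⟩ := Filter.eventually_atTop.mp (htop.eventually_ge_atTop M)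
  set b₁ := max (a + 1) (2 * x₀ - a) with hb₁def
  have hab₁ : a + 1 ≤ b₁ := le_max_left _ _
  have hmid : x₀ ≤ (a + b₁) / 2 := by
    have := le_max_right (a + 1) (2 * x₀ - a)
    simp only [← hb₁def] at this
    linarith
  have hDmid : M ≤ Q.derivative.eval ((a + b₁) / 2) := hx₀ _ hmid
  -- split the integral
  have hsub1 : Set.uIcc (0:ℝ) (1/2) ⊆ Set.uIcc (0:ℝ) 1 := by
    rw [Set.uIcc_of_le (by norm_num : (0:ℝ) ≤ 1/2), Set.uIcc_of_le (by norm_num : (0:ℝ) ≤ 1)]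
    exact Set.Icc_subset_Icc le_rfl (by norm_num)
  have hsub2 : Set.uIcc (1/2:ℝ) 1 ⊆ Set.uIcc (0:ℝ) 1 := by
    rw [Set.uIcc_of_le (by norm_num : (1/2:ℝ) ≤ 1), Set.uIcc_of_le (by norm_num : (0:ℝ) ≤ 1)]
    exact Set.Icc_subset_Icc (by norm_num) le_rfl
  have hw_int : IntervalIntegrable (fun t : ℝ => Real.sqrt ((1 - t) / t)) volume 0 1 := by
    have := intInt_mul_w (fun _ => (1:ℝ)) continuous_const
    simpa using this
  have hw1 := hw_int.mono_set hsub1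
  have hw2 := hw_int.mono_set hsub2
  have hf1 := (hGint b₁).mono_set hsub1
  have hf2 := (hGint b₁).mono_set hsub2
  set I₁ := ∫ t in (0:ℝ)..(1/2), Real.sqrt ((1 - t) / t) with hI₁def
  set I₂ := ∫ t in (1/2:ℝ)..1, Real.sqrt ((1 - t) / t) with hI₂def
  have hI₁ : 1/2 ≤ I₁ := by
    have hone : (∫ t in (0:ℝ)..(1/2), (1:ℝ)) = 1/2 := by simp
    rw [← hone]
    apply intervalIntegral.integral_mono_ae_restrict (by norm_num) intervalIntegrable_const hw1
    have hne : ∀ᵐ t : ℝ ∂volume, t ≠ 0 := by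
      rw [MeasureTheory.ae_iff]
      simp [not_not]
    filter_upwards [ae_restrict_mem measurableSet_Icc, ae_restrict_of_ae hne] with t ht htne
    have ht0 : 0 < t := lt_of_le_of_ne ht.1 (Ne.symm htne)
    have h1 : (1:ℝ) ≤ (1 - t) / t := by
      rw [le_div_iff₀ ht0]
      linarith [ht.2]
    calc (1:ℝ) = Real.sqrt 1 := Real.sqrt_one.symm
      _ ≤ Real.sqrt ((1 - t) / t) := Real.sqrt_le_sqrt h1
  have hI₂0 : 0 ≤ I₂ :=
    intervalIntegral.integral_nonneg (by norm_num) (fun t _ => Real.sqrt_nonneg _)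
  have hI₂ : I₂ ≤ 1/2 := by
    have hone : (∫ t in (1/2:ℝ)..1, (1:ℝ)) = 1/2 := by simp; norm_num
    rw [← hone]
    apply intervalIntegral.integral_mono_on (by norm_num) hw2 intervalIntegrable_const
    intro t ht
    have ht0 : (0:ℝ) < t := by linarith [ht.1]
    have h1 : (1 - t) / t ≤ 1 := by
      rw [div_le_one ht0]
      linarith [ht.1]
    calc Real.sqrt ((1 - t) / t) ≤ Real.sqrt 1 := Real.sqrt_le_sqrt h1
      _ = 1 := Real.sqrt_one
  have hsplit :
      (∫ t in (0:ℝ)..(1/2), Q.derivative.eval ((1 - t) * b₁ + t * a) * Real.sqrt ((1 - t) / t))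
      + (∫ t in (1/2:ℝ)..1, Q.derivative.eval ((1 - t) * b₁ + t * a) * Real.sqrt ((1 - t) / t))
      = G b₁ := intervalIntegral.integral_add_adjacent_intervals hf1 hf2
  have hp1 : Q.derivative.eval ((a + b₁) / 2) * I₁
      ≤ ∫ t in (0:ℝ)..(1/2), Q.derivative.eval ((1 - t) * b₁ + t * a) * Real.sqrt ((1 - t) / t) := by
    rw [hI₁def, ← intervalIntegral.integral_const_mul]
    apply intervalIntegral.integral_mono_on (by norm_num) (hw1.const_mul _) hf1
    intro t ht
    apply mul_le_mul_of_nonneg_right _ (Real.sqrt_nonneg _)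
    apply hmono
    nlinarith [mul_nonneg (by linarith [ht.2] : (0:ℝ) ≤ 1/2 - t) (by linarith : (0:ℝ) ≤ b₁ - a)]
  have hp2 : Q.derivative.eval a * I₂
      ≤ ∫ t in (1/2:ℝ)..1, Q.derivative.eval ((1 - t) * b₁ + t * a) * Real.sqrt ((1 - t) / t) := by
    rw [hI₂def, ← intervalIntegral.integral_const_mul]
    apply intervalIntegral.integral_mono_on (by norm_num) (hw2.const_mul _) hf2
    intro t ht
    apply mul_le_mul_of_nonneg_right _ (Real.sqrt_nonneg _)
    apply hmono
    nlinarith [mul_nonneg (by linarith [ht.2] : (0:ℝ) ≤ 1 - t) (by linarith : (0:ℝ) ≤ b₁ - a)]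
  have hGb₁ : Q.derivative.eval ((a + b₁) / 2) * I₁ + Q.derivative.eval a * I₂ ≤ G b₁ := by
    linarith [hp1, hp2, hsplit.le, hsplit.ge]
  have habs : 0 ≤ |Q.derivative.eval a| := abs_nonneg _
  have hDmid0 : 0 ≤ Q.derivative.eval ((a + b₁) / 2) := by
    rw [hM] at hDmid
    nlinarith [Real.pi_pos]
  have e1 : Q.derivative.eval ((a + b₁) / 2) * (1/2) ≤ Q.derivative.eval ((a + b₁) / 2) * I₁ :=
    mul_le_mul_of_nonneg_left hI₁ hDmid0
  have e2 : -(|Q.derivative.eval a| * (1/2)) ≤ Q.derivative.eval a * I₂ := by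
    nlinarith [mul_le_mul_of_nonneg_right (neg_abs_le (Q.derivative.eval a)) hI₂0,
      mul_le_mul_of_nonneg_left hI₂ habs]
  have hGlb : 1 + 2 * Real.pi ≤ G b₁ := by
    rw [hM] at hDmid
    nlinarith
  have hψb₁ : 0 < psi Q a b₁ := by
    rw [hψdef]
    nlinarith [Real.pi_pos, mul_le_mul_of_nonneg_right (by linarith : (1:ℝ) ≤ b₁ - a)
      (by linarith [Real.pi_pos] : (0:ℝ) ≤ G b₁)]
  -- IVT
  have hb₀b₁ : b₀ ≤ b₁ := by
    simp only [hb₀def]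
    linarith
  have hsub := intermediate_value_Icc hb₀b₁ (hψcont.continuousOn)
  obtain ⟨b, hbmem, hb0⟩ := hsub ⟨hψb₀.le, hψb₁.le⟩
  refine ⟨b, ⟨lt_of_lt_of_le hb₀ hbmem.1, hb0⟩, ?_⟩
  rintro y ⟨hy, hψy⟩
  by_contra hne
  rcases lt_or_gt_of_ne hne with h | h
  · exact absurd hb0 (key y b hy hψy h).ne'
  · exact absurd hψy (key b y (lt_of_lt_of_le hb₀ hbmem.1) hb0 h).ne'
end

section
/- Let Q be as in the context and fix a real number a. Then the function b ↦ ψ(a,b)/(b−a) is strictly increasing on the interval (a, +∞), and it tends to +∞ as b → +∞. -/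
open MeasureTheory intervalIntegral

-- integrability of the psi integrand
lemma key_integrable (P : Polynomial ℝ) (a b : ℝ) :
    IntervalIntegrable (fun t : ℝ => P.eval ((1 - t) * b + t * a) * Real.sqrt ((1 - t) / t))
      volume (0:ℝ) 1 := by
  obtain ⟨C, hC⟩ := (isCompact_Icc (a := (0:ℝ)) (b := 1)).exists_bound_of_continuousOn
    (f := fun t : ℝ => P.eval ((1 - t) * b + t * a))
    (by fun_prop)
  have hC0 : 0 ≤ C := le_trans (norm_nonneg _) (hC 0 (by norm_num))
  have hint : IntervalIntegrable (fun t : ℝ => C * t ^ (-(1/2) : ℝ)) volume (0:ℝ) 1 :=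
    (intervalIntegrable_rpow' (by norm_num)).const_mul C
  refine hint.mono_fun' ?_ ?_
  · exact (((P.continuous_aeval).comp (by fun_prop : Continuous fun t : ℝ => (1 - t) * b + t * a)).measurable.mul
      (Real.continuous_sqrt.measurable.comp
        ((measurable_const.sub measurable_id).div measurable_id))).aestronglyMeasurable
  · refine Filter.eventually_of_mem (self_mem_ae_restrict measurableSet_uIoc) ?_
    intro t ht
    rw [Set.uIoc_of_le (by norm_num : (0:ℝ) ≤ 1)] at ht
    obtain ⟨ht0, ht1⟩ := ht
    have hs : Real.sqrt ((1 - t) / t) ≤ t ^ (-(1/2) : ℝ) := by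
      have h1 : Real.sqrt ((1 - t) / t) ≤ Real.sqrt t⁻¹ := by
        apply Real.sqrt_le_sqrt
        rw [div_le_iff₀ ht0, inv_mul_cancel₀ ht0.ne']
        linarith
      have h2 : Real.sqrt t⁻¹ = t ^ (-(1/2) : ℝ) := by
        rw [Real.sqrt_inv, Real.sqrt_eq_rpow, ← Real.rpow_neg ht0.le]
      exact h1.trans_eq h2
    have hsnn : 0 ≤ Real.sqrt ((1 - t) / t) := Real.sqrt_nonneg _
    calc ‖P.eval ((1 - t) * b + t * a) * Real.sqrt ((1 - t) / t)‖
        = ‖P.eval ((1 - t) * b + t * a)‖ * Real.sqrt ((1 - t) / t) := by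
          rw [norm_mul, Real.norm_of_nonneg hsnn]
      _ ≤ C * t ^ (-(1/2) : ℝ) := by
          apply mul_le_mul (hC t ⟨ht0.le, ht1⟩) hs hsnn hC0

section main

variable (Q : Polynomial ℝ) (a : ℝ)

noncomputable def gfun (b : ℝ) : ℝ :=
  ∫ t in (0:ℝ)..1, Q.derivative.eval ((1 - t) * b + t * a) * Real.sqrt ((1 - t) / t)

lemma gfun_mono (hconv : ∀ x : ℝ, 0 ≤ Q.derivative.derivative.eval x)
    {b₁ b₂ : ℝ} (h : b₁ ≤ b₂) : gfun Q a b₁ ≤ gfun Q a b₂ := by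
  have Pmono : Monotone fun x : ℝ => Q.derivative.eval x := by
    apply monotone_of_deriv_nonneg (Polynomial.differentiable _)
    intro x
    rw [Polynomial.deriv]
    exact hconv x
  apply intervalIntegral.integral_mono_on (by norm_num)
    (key_integrable _ a b₁) (key_integrable _ a b₂)
  intro t ht
  apply mul_le_mul_of_nonneg_right _ (Real.sqrt_nonneg _)
  apply Pmono
  nlinarith [ht.1, ht.2]

lemma gfun_lower (hconv : ∀ x : ℝ, 0 ≤ Q.derivative.derivative.eval x)
    {b : ℝ} (hab : a ≤ b) (hM : 0 ≤ Q.derivative.eval ((a + b) / 2)) :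
    Q.derivative.eval ((a + b) / 2) / 2 + min 0 (Q.derivative.eval a) / 2 ≤ gfun Q a b := by
  set P := Q.derivative with hP
  have Pmono : Monotone fun x : ℝ => P.eval x := by
    apply monotone_of_deriv_nonneg (Polynomial.differentiable _)
    intro x
    rw [Polynomial.deriv]
    exact hconv x
  set M := P.eval ((a + b) / 2) with hMdef
  set c := min 0 (P.eval a) with hcdef
  have hc0 : c ≤ 0 := min_le_left _ _
  have hca : c ≤ P.eval a := min_le_right _ _
  have hI1 : IntervalIntegrable (fun t : ℝ => P.eval ((1 - t) * b + t * a) * Real.sqrt ((1 - t) / t)) volume 0 (1/2) :=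
    (key_integrable P a b).mono_set' (by rw [Set.uIoc_of_le (by norm_num : (0:ℝ) ≤ 1/2), Set.uIoc_of_le (by norm_num : (0:ℝ) ≤ 1)]; exact Set.Ioc_subset_Ioc le_rfl (by norm_num))
  have hI2 : IntervalIntegrable (fun t : ℝ => P.eval ((1 - t) * b + t * a) * Real.sqrt ((1 - t) / t)) volume (1/2) 1 :=
    (key_integrable P a b).mono_set' (by rw [Set.uIoc_of_le (by norm_num : (1:ℝ)/2 ≤ 1), Set.uIoc_of_le (by norm_num : (0:ℝ) ≤ 1)]; exact Set.Ioc_subset_Ioc (by norm_num) le_rfl)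
  have hsplit : gfun Q a b = (∫ t in (0:ℝ)..(1/2), P.eval ((1 - t) * b + t * a) * Real.sqrt ((1 - t) / t))
      + ∫ t in (1/2:ℝ)..1, P.eval ((1 - t) * b + t * a) * Real.sqrt ((1 - t) / t) :=
    (intervalIntegral.integral_add_adjacent_intervals hI1 hI2).symm
  have hlow1 : M / 2 ≤ ∫ t in (0:ℝ)..(1/2), P.eval ((1 - t) * b + t * a) * Real.sqrt ((1 - t) / t) := by
    have h0ae : ∀ᵐ t : ℝ ∂(volume.restrict (Set.Icc (0:ℝ) (1/2))), t ≠ 0 := by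
      refine Filter.Eventually.filter_mono (ae_mono Measure.restrict_le_self) ?_
      rw [ae_iff]
      simpa using measure_singleton (0:ℝ)
    have := intervalIntegral.integral_mono_ae_restrict (μ := volume) (a := (0:ℝ)) (b := 1/2)
      (f := fun _ => M) (g := fun t : ℝ => P.eval ((1 - t) * b + t * a) * Real.sqrt ((1 - t) / t))
      (by norm_num) (intervalIntegrable_const) hI1 ?_
    · rw [intervalIntegral.integral_const, smul_eq_mul] at this
      linarith
    · filter_upwards [h0ae, self_mem_ae_restrict measurableSet_Icc] with t ht hIcc
      · have ht0 : 0 < t := lt_of_le_of_ne hIcc.1 (Ne.symm ht)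
        have ht12 : t ≤ 1/2 := hIcc.2
        have hpt : (a + b) / 2 ≤ (1 - t) * b + t * a := by nlinarith
        have hPge : M ≤ P.eval ((1 - t) * b + t * a) := Pmono hpt
        have hsge : 1 ≤ Real.sqrt ((1 - t) / t) := by
          rw [Real.one_le_sqrt]
          rw [le_div_iff₀ ht0]
          linarith
        calc M ≤ P.eval ((1 - t) * b + t * a) := hPge
          _ ≤ P.eval ((1 - t) * b + t * a) * Real.sqrt ((1 - t) / t) :=
            le_mul_of_one_le_right (hM.trans hPge) hsge
  have hlow2 : c / 2 ≤ ∫ t in (1/2:ℝ)..1, P.eval ((1 - t) * b + t * a) * Real.sqrt ((1 - t) / t) := by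
    have := intervalIntegral.integral_mono_on (μ := volume) (a := (1/2:ℝ)) (b := 1)
      (f := fun _ => c) (g := fun t : ℝ => P.eval ((1 - t) * b + t * a) * Real.sqrt ((1 - t) / t))
      (by norm_num) (intervalIntegrable_const) hI2 ?_
    · rw [intervalIntegral.integral_const, smul_eq_mul] at this
      linarith
    · intro t ht
      obtain ⟨ht12, ht1⟩ := ht
      have ht0 : (0:ℝ) < t := by linarith
      have hpt : a ≤ (1 - t) * b + t * a := by nlinarith
      have hPge : c ≤ P.eval ((1 - t) * b + t * a) := hca.trans (Pmono hpt)
      have hs0 : 0 ≤ Real.sqrt ((1 - t) / t) := Real.sqrt_nonneg _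
      have hs1 : Real.sqrt ((1 - t) / t) ≤ 1 := by
        rw [Real.sqrt_le_one]
        rw [div_le_one ht0]
        linarith
      nlinarith [mul_nonneg hs0 (sub_nonneg.2 hPge), mul_nonneg (neg_nonneg.2 hc0) (sub_nonneg.2 hs1)]
  rw [hsplit]
  linarith

end main

/-- For fixed `a`, the map `b ↦ ψ(a,b)/(b−a)` is strictly increasing on `(a, ∞)`
and tends to `+∞` as `b → +∞`. -/
theorem strictMonoOn_psi_div (Q : Polynomial ℝ) (m : ℕ) (hm : 1 ≤ m)
    (hdeg : Q.natDegree = 2 * m) (hlead : 0 < Q.leadingCoeff)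
    (hconv : ∀ x : ℝ, 0 ≤ Q.derivative.derivative.eval x) (a : ℝ) :
    StrictMonoOn (fun b => psi Q a b / (b - a)) (Set.Ioi a) ∧
      Filter.Tendsto (fun b => psi Q a b / (b - a)) Filter.atTop Filter.atTop := by
  have hpsi : ∀ b, psi Q a b = (b - a) * gfun Q a b - 2 * Real.pi := fun _ => rfl
  have key : ∀ b, a < b → psi Q a b / (b - a) = gfun Q a b - 2 * Real.pi / (b - a) := by
    intro b hb
    rw [hpsi, sub_div, mul_div_cancel_left₀ _ (sub_ne_zero.2 hb.ne')]
  constructor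
  · intro b₁ h₁ b₂ h₂ h₁₂
    simp only [Set.mem_Ioi] at h₁ h₂
    have hg := gfun_mono Q a hconv h₁₂.le
    have hd : 2 * Real.pi / (b₂ - a) < 2 * Real.pi / (b₁ - a) :=
      div_lt_div_of_pos_left (by positivity) (by linarith) (by linarith)
    simp only [key b₁ h₁, key b₂ h₂]
    linarith
  · set c := min 0 (Q.derivative.eval a) with hc
    have hndeg : Q.derivative.natDegree = 2 * m - 1 := by
      have := Polynomial.degree_derivative_eq Q (by omega)
      rw [hdeg] at this
      exact Polynomial.natDegree_eq_of_degree_eq_some this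
    have hdegpos : 0 < Q.derivative.degree := by
      rw [Polynomial.degree_derivative_eq Q (by omega), hdeg]
      exact_mod_cast (by omega : 0 < 2 * m - 1)
    have hleadpos : 0 < Q.derivative.leadingCoeff := by
      rw [Polynomial.leadingCoeff, hndeg, Polynomial.coeff_derivative]
      have h1 : 2 * m - 1 + 1 = 2 * m := by omega
      rw [h1, ← hdeg, ← Polynomial.leadingCoeff]
      exact mul_pos hlead (by positivity)
    have hPtop : Filter.Tendsto (fun x => Q.derivative.eval x) Filter.atTop Filter.atTop :=
      Polynomial.tendsto_atTop_of_leadingCoeff_nonneg _ hdegpos hleadpos.le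
    have hmid : Filter.Tendsto (fun b : ℝ => (a + b) / 2) Filter.atTop Filter.atTop :=
      (Filter.tendsto_atTop_add_const_left _ a Filter.tendsto_id).atTop_div_const (by norm_num)
    have hMtop : Filter.Tendsto (fun b : ℝ => Q.derivative.eval ((a + b) / 2))
        Filter.atTop Filter.atTop := hPtop.comp hmid
    have hden : Filter.Tendsto (fun b : ℝ => 2 * Real.pi / (b - a)) Filter.atTop (nhds 0) := by
      have h2 := Filter.tendsto_atTop_add_const_right Filter.atTop (-a)
        (Filter.tendsto_id (α := ℝ))
      simp only [sub_eq_add_neg]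
      exact Filter.Tendsto.div_atTop tendsto_const_nhds h2
    have hL : Filter.Tendsto
        (fun b : ℝ => Q.derivative.eval ((a + b) / 2) / 2 + (c / 2 - 2 * Real.pi / (b - a)))
        Filter.atTop Filter.atTop := by
      apply Filter.Tendsto.atTop_add (hMtop.atTop_div_const (by norm_num))
      simpa only [sub_zero] using
        (tendsto_const_nhds (x := c / 2) (f := Filter.atTop (α := ℝ))).sub hden
    apply Filter.tendsto_atTop_mono' _ _ hL
    filter_upwards [Filter.eventually_gt_atTop a, hMtop.eventually_ge_atTop 0] with b hb hMb
    rw [key b hb]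
    have := gfun_lower Q a hconv hb.le hMb
    linarith
end

section
/- Let Q be as in the context. Let a₁ < a₂ be real numbers and let b₁ > a₁ and b₂ > a₂ satisfy ψ(a₁,b₁) = 0 and ψ(a₂,b₂) = 0. If moreover φ(a₁,b₁) ≥ 0, then b₁ < b₂. (The map a ↦ b(a) is strictly increasing on the region where φ(a, b(a)) ≥ 0.) -/
open MeasureTheory intervalIntegral

section Aux
open Set Metric

lemma meas_w1 : Measurable fun t : ℝ => (Real.sqrt (t*(1-t)))⁻¹ :=
  (Real.continuous_sqrt.measurable.comp (measurable_id.mul (measurable_const.sub measurable_id))).inv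

lemma meas_w2 : Measurable fun t : ℝ => Real.sqrt ((1-t)/t) :=
  Real.continuous_sqrt.measurable.comp ((measurable_const.sub measurable_id).div measurable_id)

lemma w1_le {t : ℝ} (h0 : 0 < t) (h1 : t ≤ 1) :
    (Real.sqrt (t*(1-t)))⁻¹ ≤ Real.sqrt 2 * (t ^ (-(1/2):ℝ) + (1-t) ^ (-(1/2):ℝ)) := by
  have hrp : (0:ℝ) ≤ t ^ (-(1/2):ℝ) := Real.rpow_nonneg h0.le _
  have hrp2 : (0:ℝ) ≤ (1-t) ^ (-(1/2):ℝ) := Real.rpow_nonneg (by linarith) _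
  have hsqrt2 : (0:ℝ) < Real.sqrt 2 := Real.sqrt_pos.mpr (by norm_num)
  rcases le_or_gt t (1/2) with hc | hc
  · have hs : Real.sqrt (t * 2⁻¹) ≤ Real.sqrt (t*(1-t)) := Real.sqrt_le_sqrt (by nlinarith)
    have hpos : 0 < Real.sqrt (t * 2⁻¹) := Real.sqrt_pos.mpr (by positivity)
    have h2 := inv_anti₀ hpos hs
    have heq : (Real.sqrt (t * 2⁻¹))⁻¹ = Real.sqrt 2 * t ^ (-(1/2):ℝ) := by
      rw [Real.sqrt_mul h0.le, Real.sqrt_inv, mul_inv, inv_inv,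
        Real.rpow_neg h0.le, Real.sqrt_eq_rpow]
      ring
    rw [heq] at h2
    nlinarith
  · have h1t : 0 ≤ 1 - t := by linarith
    have hs : Real.sqrt ((1-t) * 2⁻¹) ≤ Real.sqrt (t*(1-t)) := Real.sqrt_le_sqrt (by nlinarith)
    rcases eq_or_lt_of_le h1t with he | hpos'
    · have : t = 1 := by linarith
      subst this
      simp
    · have hpos : 0 < Real.sqrt ((1-t) * 2⁻¹) := Real.sqrt_pos.mpr (by positivity)
      have h2 := inv_anti₀ hpos hs
      have heq : (Real.sqrt ((1-t) * 2⁻¹))⁻¹ = Real.sqrt 2 * (1-t) ^ (-(1/2):ℝ) := by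
        rw [Real.sqrt_mul h1t, Real.sqrt_inv, mul_inv, inv_inv,
          Real.rpow_neg h1t, Real.sqrt_eq_rpow]
        ring
      rw [heq] at h2
      nlinarith

lemma int_w1 : IntervalIntegrable (fun t : ℝ => (Real.sqrt (t*(1-t)))⁻¹) volume 0 1 := by
  have hg : IntervalIntegrable (fun t : ℝ => Real.sqrt 2 * (t ^ (-(1/2):ℝ) + (1-t) ^ (-(1/2):ℝ)))
      volume 0 1 := by
    apply IntervalIntegrable.const_mul
    apply IntervalIntegrable.add
    · exact intervalIntegral.intervalIntegrable_rpow' (by norm_num)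
    · have := (intervalIntegral.intervalIntegrable_rpow' (r := (-(1/2):ℝ)) (a := 0) (b := 1)
        (by norm_num)).comp_sub_left 1
      exact IntervalIntegrable.symm (by simpa using this)
  apply hg.mono_fun' meas_w1.aestronglyMeasurable
  filter_upwards [ae_restrict_mem measurableSet_uIoc] with t ht
  rw [Set.uIoc_of_le (by norm_num : (0:ℝ) ≤ 1)] at ht
  rw [Real.norm_eq_abs, abs_of_nonneg (by positivity)]
  exact w1_le ht.1 ht.2

lemma w2_eq {t : ℝ} (h0 : 0 ≤ t) (h1 : t ≤ 1) :
    Real.sqrt ((1-t)/t) = (1-t) * (Real.sqrt (t*(1-t)))⁻¹ := by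
  rcases eq_or_lt_of_le h0 with he | hpos
  · rw [← he]; simp
  · have h1t : 0 ≤ 1 - t := by linarith
    have h : (1-t)/t = (1-t)^2 / (t*(1-t)) := by
      rcases eq_or_lt_of_le h1t with he' | hlt
      · rw [← he']; simp
      · field_simp
    rw [h, Real.sqrt_div (by positivity), Real.sqrt_sq h1t, div_eq_mul_inv]

lemma tw2_eq {t : ℝ} (h0 : 0 ≤ t) (h1 : t ≤ 1) :
    t * Real.sqrt ((1-t)/t) = Real.sqrt (t*(1-t)) := by
  rcases eq_or_lt_of_le h0 with he | hpos
  · rw [← he]; simp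
  · have h : t*(1-t) = t^2 * ((1-t)/t) := by field_simp
    rw [h, Real.sqrt_mul (by positivity), Real.sqrt_sq h0]

-- half-weight: w2 - w1/2 = (1-2t)/(2 sqrt(t(1-t)))  on [0,1]
lemma w3_eq {t : ℝ} (h0 : 0 ≤ t) (h1 : t ≤ 1) :
    Real.sqrt ((1-t)/t) - (Real.sqrt (t*(1-t)))⁻¹ / 2 = (1-2*t) / (2 * Real.sqrt (t*(1-t))) := by
  rw [w2_eq h0 h1]
  rcases eq_or_lt_of_le h0 with he | hpos
  · rw [← he]; simp
  · rcases eq_or_lt_of_le h1 with he' | hlt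
    · rw [he']; simp
    · have hs : 0 < Real.sqrt (t*(1-t)) := Real.sqrt_pos.mpr (by nlinarith)
      field_simp
      ring

lemma int_w2 : IntervalIntegrable (fun t : ℝ => Real.sqrt ((1-t)/t)) volume 0 1 := by
  apply int_w1.mono_fun' meas_w2.aestronglyMeasurable
  filter_upwards [ae_restrict_mem measurableSet_uIoc] with t ht
  rw [Set.uIoc_of_le (by norm_num : (0:ℝ) ≤ 1)] at ht
  rw [Real.norm_eq_abs, abs_of_nonneg (Real.sqrt_nonneg _), w2_eq ht.1.le ht.2]
  have h1 : (0:ℝ) ≤ (Real.sqrt (t*(1-t)))⁻¹ := by positivity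
  nlinarith [ht.1.le, ht.2]

lemma int_w3 : IntervalIntegrable (fun t : ℝ => (1-2*t) / (2 * Real.sqrt (t*(1-t)))) volume 0 1 := by
  apply int_w1.mono_fun'
  · apply Measurable.aestronglyMeasurable
    exact ((measurable_const.sub (measurable_id.const_mul 2)).div
      (((Real.continuous_sqrt.measurable.comp
        (measurable_id.mul (measurable_const.sub measurable_id)))).const_mul 2))
  · filter_upwards [ae_restrict_mem measurableSet_uIoc] with t ht
    rw [Set.uIoc_of_le (by norm_num : (0:ℝ) ≤ 1)] at ht
    have hs : (0:ℝ) ≤ Real.sqrt (t*(1-t)) := Real.sqrt_nonneg _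
    rw [Real.norm_eq_abs, abs_div, abs_of_nonneg (by positivity : (0:ℝ) ≤ 2 * Real.sqrt (t*(1-t)))]
    have habs : |1 - 2*t| ≤ 1 := by rw [abs_le]; constructor <;> nlinarith [ht.1.le, ht.2]
    rcases eq_or_lt_of_le hs with he | hpos
    · rw [← he]; simp
    · rw [div_le_iff₀ (by positivity)]
      have : (Real.sqrt (t*(1-t)))⁻¹ * (2 * Real.sqrt (t*(1-t))) = 2 := by field_simp
      rw [this]; linarith

lemma int_cont_mul {f : ℝ → ℝ} (hf : Continuous f) {w : ℝ → ℝ}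
    (hw : IntervalIntegrable w volume 0 1) :
    IntervalIntegrable (fun t => f t * w t) volume 0 1 :=
  hw.continuousOn_mul hf.continuousOn

lemma hasDerivAt_seg (p : Polynomial ℝ) (a b t : ℝ) :
    HasDerivAt (fun t : ℝ => p.eval ((1-t)*b + t*a))
      (p.derivative.eval ((1-t)*b + t*a) * (a-b)) t := by
  have hseg : HasDerivAt (fun t : ℝ => (1-t)*b + t*a) (a-b) t := by
    have h := (((hasDerivAt_const t (1:ℝ)).sub (hasDerivAt_id t)).mul_const b).add
      ((hasDerivAt_id t).mul_const a)
    exact h.congr_deriv (by ring)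
  exact (Polynomial.hasDerivAt p _).comp t hseg

lemma ibp (p : Polynomial ℝ) (a b : ℝ) :
    ∫ t in (0:ℝ)..1, p.eval ((1-t)*b + t*a) * ((1-2*t)/(2*Real.sqrt (t*(1-t))))
      = (b - a) * ∫ t in (0:ℝ)..1, p.derivative.eval ((1-t)*b + t*a) * Real.sqrt (t*(1-t)) := by
  set F : ℝ → ℝ := fun t => p.eval ((1-t)*b + t*a) * Real.sqrt (t*(1-t)) with hF
  set F' : ℝ → ℝ := fun t => p.derivative.eval ((1-t)*b + t*a) * (a-b) * Real.sqrt (t*(1-t))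
      + p.eval ((1-t)*b + t*a) * ((1-2*t)/(2*Real.sqrt (t*(1-t)))) with hF'
  have hcontp : Continuous fun t : ℝ => p.eval ((1-t)*b + t*a) := by
    have : Continuous fun t : ℝ => (1-t)*b + t*a := by continuity
    exact p.continuous.comp this
  have hcontp' : Continuous fun t : ℝ => p.derivative.eval ((1-t)*b + t*a) := by
    have : Continuous fun t : ℝ => (1-t)*b + t*a := by continuity
    exact p.derivative.continuous.comp this
  have hcontsq : Continuous fun t : ℝ => Real.sqrt (t*(1-t)) := by
    exact Real.continuous_sqrt.comp (by continuity)
  have hint1 : IntervalIntegrable (fun t : ℝ =>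
      p.derivative.eval ((1-t)*b + t*a) * (a-b) * Real.sqrt (t*(1-t))) volume 0 1 :=
    (((hcontp'.mul continuous_const).mul hcontsq)).intervalIntegrable 0 1
  have hint2 : IntervalIntegrable (fun t : ℝ =>
      p.eval ((1-t)*b + t*a) * ((1-2*t)/(2*Real.sqrt (t*(1-t))))) volume 0 1 :=
    int_cont_mul hcontp int_w3
  have hderiv : ∀ t ∈ Ioo (0:ℝ) 1, HasDerivAt F (F' t) t := by
    intro t ht
    have hq : HasDerivAt (fun t : ℝ => t*(1-t)) (1-2*t) t := by
      have h := (hasDerivAt_id t).mul ((hasDerivAt_const t (1:ℝ)).sub (hasDerivAt_id t))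
      exact h.congr_deriv (by simp only [Pi.sub_apply, id]; ring)
    have hne : t*(1-t) ≠ 0 := ne_of_gt (by nlinarith [ht.1, ht.2])
    have hsq : HasDerivAt (fun t : ℝ => Real.sqrt (t*(1-t)))
        ((1-2*t)/(2*Real.sqrt (t*(1-t)))) t := hq.sqrt hne
    exact (hasDerivAt_seg p a b t).mul hsq
  have hcont : ContinuousOn F (Icc 0 1) := (hcontp.mul hcontsq).continuousOn
  have hintF' : IntervalIntegrable F' volume 0 1 := hint1.add hint2
  have key := integral_eq_sub_of_hasDerivAt_of_le (by norm_num) hcont hderiv hintF'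
  have hF0 : F 0 = 0 := by simp [hF]
  have hF1 : F 1 = 0 := by simp [hF]
  rw [hF0, hF1, sub_zero] at key
  -- key : ∫ F' = 0
  have hsplit : (∫ t in (0:ℝ)..1, F' t)
      = (∫ t in (0:ℝ)..1, p.derivative.eval ((1-t)*b + t*a) * (a-b) * Real.sqrt (t*(1-t)))
      + ∫ t in (0:ℝ)..1, p.eval ((1-t)*b + t*a) * ((1-2*t)/(2*Real.sqrt (t*(1-t)))) :=
    integral_add hint1 hint2
  rw [hsplit] at key
  have : (∫ t in (0:ℝ)..1, p.derivative.eval ((1-t)*b + t*a) * (a-b) * Real.sqrt (t*(1-t)))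
      = (a-b) * ∫ t in (0:ℝ)..1, p.derivative.eval ((1-t)*b + t*a) * Real.sqrt (t*(1-t)) := by
    rw [← intervalIntegral.integral_const_mul]
    apply intervalIntegral.integral_congr
    intro t _; ring
  rw [this] at key
  linarith [key]

lemma hasDerivAt_G (p : Polynomial ℝ) (b x₀ : ℝ) :
    HasDerivAt (fun a => ∫ t in (0:ℝ)..1, p.eval ((1-t)*b + t*a) * Real.sqrt ((1-t)/t))
      (∫ t in (0:ℝ)..1, p.derivative.eval ((1-t)*b + t*x₀) * t * Real.sqrt ((1-t)/t)) x₀ := by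
  set R : ℝ := |b| + |x₀| + 1 with hR
  obtain ⟨C, hC⟩ := (isCompact_Icc (a := -R) (b := R)).exists_bound_of_continuousOn
    p.derivative.continuous.continuousOn
  have hcont : ∀ x : ℝ, Continuous fun t : ℝ => p.eval ((1-t)*b + t*x) := fun x =>
    p.continuous.comp (by continuity)
  have hcont' : ∀ x : ℝ, Continuous fun t : ℝ => p.derivative.eval ((1-t)*b + t*x) := fun x =>
    p.derivative.continuous.comp (by continuity)
  have hseg_mem : ∀ t ∈ Set.Ioc (0:ℝ) 1, ∀ x ∈ ball x₀ 1, (1-t)*b + t*x ∈ Set.Icc (-R) R := by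
    intro t ht x hx
    have hxb : |x - x₀| < 1 := by simpa [Real.dist_eq] using hx
    have h1 : |(1-t)*b + t*x| ≤ (1-t)*|b| + t*|x| := by
      calc |(1-t)*b + t*x| ≤ |(1-t)*b| + |t*x| := abs_add_le _ _
      _ = (1-t)*|b| + t*|x| := by
          rw [abs_mul, abs_mul, abs_of_nonneg (by linarith [ht.2] : (0:ℝ) ≤ 1 - t),
            abs_of_nonneg ht.1.le]
    have hx2 : |x| ≤ |x₀| + 1 := by
      calc |x| = |x₀ + (x - x₀)| := by ring_nf
      _ ≤ |x₀| + |x - x₀| := abs_add_le _ _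
      _ ≤ |x₀| + 1 := by linarith
    have : |(1-t)*b + t*x| ≤ R := by
      rw [hR]
      have h2 : (1-t)*|b| ≤ |b| := by nlinarith [abs_nonneg b, ht.1.le, ht.2]
      have h3 : t*|x| ≤ |x₀| + 1 := by nlinarith [abs_nonneg x, ht.1.le, ht.2]
      linarith
    exact abs_le.mp this |> fun ⟨u, v⟩ => ⟨u, v⟩
  have := intervalIntegral.hasDerivAt_integral_of_dominated_loc_of_deriv_le
    (F := fun x t => p.eval ((1-t)*b + t*x) * Real.sqrt ((1-t)/t))
    (F' := fun x t => p.derivative.eval ((1-t)*b + t*x) * t * Real.sqrt ((1-t)/t))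
    (x₀ := x₀) (a := 0) (b := 1) (s := ball x₀ 1) (bound := fun t => C * Real.sqrt ((1-t)/t))
    (ball_mem_nhds x₀ (by norm_num))
    (Filter.Eventually.of_forall fun x =>
      (((hcont x).measurable.mul meas_w2).aestronglyMeasurable))
    (int_cont_mul (hcont x₀) int_w2)
    ((((hcont' x₀).measurable.mul measurable_id).mul meas_w2).aestronglyMeasurable)
    ?_ (int_w2.const_mul C) ?_
  · exact this.2
  · apply Filter.Eventually.of_forall
    intro t ht x hx
    rw [Set.uIoc_of_le (by norm_num : (0:ℝ) ≤ 1)] at ht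
    have hmem := hseg_mem t ht x hx
    have hCb := hC _ hmem
    have hs : (0:ℝ) ≤ Real.sqrt ((1-t)/t) := Real.sqrt_nonneg _
    rw [Real.norm_eq_abs, abs_mul, abs_mul, abs_of_nonneg hs, abs_of_nonneg ht.1.le]
    have hC0 : 0 ≤ C := le_trans (norm_nonneg _)
      (hC 0 ⟨by simp [hR]; linarith [abs_nonneg b, abs_nonneg x₀],
        by simp [hR]; linarith [abs_nonneg b, abs_nonneg x₀]⟩)
    have habs : |Polynomial.eval ((1-t)*b + t*x) p.derivative| ≤ C := hCb
    have hgoal : |Polynomial.eval ((1-t)*b + t*x) p.derivative| * t * Real.sqrt ((1-t)/t)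
        ≤ C * Real.sqrt ((1-t)/t) := by
      have h1 : |Polynomial.eval ((1-t)*b + t*x) p.derivative| * t ≤ C := by
        nlinarith [ht.1.le, ht.2, abs_nonneg (Polynomial.eval ((1-t)*b + t*x) p.derivative)]
      exact mul_le_mul_of_nonneg_right h1 hs
    exact hgoal
  · apply Filter.Eventually.of_forall
    intro t ht x hx
    have hinner : HasDerivAt (fun x : ℝ => (1-t)*b + t*x) t x := by
      have h := (hasDerivAt_const x ((1-t)*b)).add ((hasDerivAt_id x).const_mul t)
      exact h.congr_deriv (by ring)
    exact ((Polynomial.hasDerivAt p _).comp x hinner).mul_const _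

lemma hasDerivAt_H (p : Polynomial ℝ) (b x₀ : ℝ) :
    HasDerivAt (fun a => (b - a) * ∫ t in (0:ℝ)..1, p.eval ((1-t)*b + t*a) * Real.sqrt ((1-t)/t))
      (-(∫ t in (0:ℝ)..1, p.eval ((1-t)*b + t*x₀) / Real.sqrt (t*(1-t))) / 2) x₀ := by
  have hcontp : Continuous fun t : ℝ => p.eval ((1-t)*b + t*x₀) :=
    p.continuous.comp (by continuity)
  have hG := hasDerivAt_G p b x₀
  have hlin : HasDerivAt (fun a : ℝ => b - a) (-1) x₀ := by
    have h := (hasDerivAt_const x₀ b).sub (hasDerivAt_id x₀)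
    exact h.congr_deriv (by ring)
  have hH := hlin.mul hG
  -- derivative: (-1) * G x₀ + (b - x₀) * G' x₀
  refine HasDerivAt.congr_deriv hH ?_
  -- remains: value identity
  set G : ℝ := ∫ t in (0:ℝ)..1, p.eval ((1-t)*b + t*x₀) * Real.sqrt ((1-t)/t) with hGdef
  -- (A) G' = ∫ p' (seg) * sqrt(t(1-t))
  have hA : (∫ t in (0:ℝ)..1, p.derivative.eval ((1-t)*b + t*x₀) * t * Real.sqrt ((1-t)/t))
      = ∫ t in (0:ℝ)..1, p.derivative.eval ((1-t)*b + t*x₀) * Real.sqrt (t*(1-t)) := by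
    apply intervalIntegral.integral_congr
    intro t ht
    rw [Set.uIcc_of_le (by norm_num : (0:ℝ) ≤ 1)] at ht
    beta_reduce
    rw [mul_assoc, tw2_eq ht.1 ht.2]
  -- (B) ibp
  have hB := ibp p x₀ b
  -- (C) split of w3 integral
  have hint2 : IntervalIntegrable (fun t : ℝ =>
      p.eval ((1-t)*b + t*x₀) * Real.sqrt ((1-t)/t)) volume 0 1 := int_cont_mul hcontp int_w2
  have hint1 : IntervalIntegrable (fun t : ℝ =>
      p.eval ((1-t)*b + t*x₀) * (Real.sqrt (t*(1-t)))⁻¹ / 2) volume 0 1 :=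
    (int_cont_mul hcontp int_w1).div_const 2
  have hC : (∫ t in (0:ℝ)..1, p.eval ((1-t)*b + t*x₀) * ((1-2*t)/(2*Real.sqrt (t*(1-t)))))
      = G - (∫ t in (0:ℝ)..1, p.eval ((1-t)*b + t*x₀) * (Real.sqrt (t*(1-t)))⁻¹ / 2) := by
    rw [hGdef, ← intervalIntegral.integral_sub hint2 hint1]
    apply intervalIntegral.integral_congr
    intro t ht
    rw [Set.uIcc_of_le (by norm_num : (0:ℝ) ≤ 1)] at ht
    beta_reduce
    rw [← w3_eq ht.1 ht.2]
    ring
  have hD : (∫ t in (0:ℝ)..1, p.eval ((1-t)*b + t*x₀) * (Real.sqrt (t*(1-t)))⁻¹ / 2)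
      = (∫ t in (0:ℝ)..1, p.eval ((1-t)*b + t*x₀) / Real.sqrt (t*(1-t))) / 2 := by
    rw [← intervalIntegral.integral_div]
    apply intervalIntegral.integral_congr
    intro t _
    beta_reduce
    ring
  rw [hA] at hG ⊢
  -- goal: -(∫ p/sqrt)/2 = (-1) * G + (b - x₀) * ∫ p' sqrt
  rw [← hB, hC, hD]
  ring

lemma peval_strictMono (p : Polynomial ℝ) (hd : p.derivative ≠ 0)
    (h : ∀ x : ℝ, 0 ≤ p.derivative.eval x) : StrictMono fun x : ℝ => p.eval x := by
  have hmono : Monotone fun x : ℝ => p.eval x := by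
    apply monotone_of_deriv_nonneg p.differentiable
    intro x
    rw [Polynomial.deriv]
    exact h x
  intro x y hxy
  rcases lt_or_eq_of_le (hmono hxy.le) with h' | h'
  · exact h'
  · exfalso
    apply hd
    have hconst : ∀ z ∈ Set.Icc x y, p.eval z = p.eval x := by
      intro z hz
      have h1 := hmono hz.1
      have h2 := hmono hz.2
      simp only at h1 h2 h'
      linarith
    have hzero : p - Polynomial.C (p.eval x) = 0 := by
      apply Polynomial.eq_zero_of_infinite_isRoot
      apply (Set.Icc_infinite hxy).mono
      intro z hz
      simp only [Set.mem_setOf_eq, Polynomial.IsRoot, Polynomial.eval_sub, Polynomial.eval_C]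
      rw [hconst z hz]
      ring
    have : p = Polynomial.C (p.eval x) := by linear_combination (norm := module) hzero
    rw [this]
    simp

lemma Qpp_ne_zero (Q : Polynomial ℝ) (m : ℕ) (hm : 1 ≤ m) (hdeg : Q.natDegree = 2*m)
    (hlead : 0 < Q.leadingCoeff) : Q.derivative.derivative ≠ 0 := by
  intro hzero
  have hc : Q.derivative.derivative.coeff (2*m - 2) = 0 := by rw [hzero]; simp
  rw [Polynomial.coeff_derivative, Polynomial.coeff_derivative] at hc
  have h1 : 2*m - 2 + 1 = 2*m - 1 := by omega
  have h2 : 2*m - 1 + 1 = 2*m := by omega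
  rw [h1, h2] at hc
  have hlc : Q.coeff (2*m) = Q.leadingCoeff := by rw [← hdeg]; rfl
  rw [hlc] at hc
  have hpos1 : (0:ℝ) < ((2*m - 1 : ℕ) : ℝ) + 1 := by positivity
  have hpos2 : (0:ℝ) < ((2*m - 2 : ℕ) : ℝ) + 1 := by positivity
  have := mul_pos (mul_pos hlead hpos1) hpos2
  linarith

lemma phi_lt (Q : Polynomial ℝ) (hsm : StrictMono fun x : ℝ => Q.derivative.eval x)
    {a a'' : ℝ} (b : ℝ) (h : a < a'') : phi Q a b < phi Q a'' b := by
  set q : ℝ → ℝ := fun t =>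
    (Q.derivative.eval ((1-t)*b + t*a'') - Q.derivative.eval ((1-t)*b + t*a))
      / Real.sqrt (t*(1-t)) with hq
  have hcont : ∀ c : ℝ, Continuous fun t : ℝ =>
      Q.derivative.eval ((1-t)*b + t*c) := fun c => Q.derivative.continuous.comp (by continuity)
  have hint : ∀ c : ℝ, IntervalIntegrable
      (fun t => Q.derivative.eval ((1-t)*b + t*c) / Real.sqrt (t*(1-t))) volume 0 1 := by
    intro c
    have : (fun t => Q.derivative.eval ((1-t)*b + t*c) / Real.sqrt (t*(1-t)))
        = fun t => Q.derivative.eval ((1-t)*b + t*c) * (Real.sqrt (t*(1-t)))⁻¹ := by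
      funext t; rw [div_eq_mul_inv]
    rw [this]
    exact int_cont_mul (hcont c) int_w1
  have hq_int : IntervalIntegrable q volume 0 1 := by
    have : q = fun t => (Q.derivative.eval ((1-t)*b + t*a'') - Q.derivative.eval ((1-t)*b + t*a))
        * (Real.sqrt (t*(1-t)))⁻¹ := by
      funext t; simp only [hq]; rw [div_eq_mul_inv]
    rw [this]
    exact int_cont_mul ((hcont a'').sub (hcont a)) int_w1
  have hnonneg : ∀ t ∈ Set.Icc (0:ℝ) 1, 0 ≤ q t := by
    intro t ht
    apply div_nonneg _ (Real.sqrt_nonneg _)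
    have : (1-t)*b + t*a ≤ (1-t)*b + t*a'' := by nlinarith [ht.1, ht.2]
    have := hsm.monotone this
    simpa using this
  have hpos : ∀ t ∈ Set.Ioo (1/4:ℝ) (3/4), 0 < q t := by
    intro t ht
    apply div_pos
    · have harg : (1-t)*b + t*a < (1-t)*b + t*a'' := by nlinarith [ht.1, ht.2]
      have := hsm harg
      simpa using this
    · apply Real.sqrt_pos.mpr
      nlinarith [ht.1, ht.2]
  have hsub : ∀ c d : ℝ, 0 ≤ c → d ≤ 1 → c ≤ d → IntervalIntegrable q volume c d := by
    intro c d hc hd hcd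
    apply hq_int.mono_set'
    rw [Set.uIoc_of_le hcd, Set.uIoc_of_le (by norm_num : (0:ℝ) ≤ 1)]
    exact Set.Ioc_subset_Ioc hc hd
  have h1 := hsub 0 (1/4) le_rfl (by norm_num) (by norm_num)
  have h2 := hsub (1/4) (3/4) (by norm_num) (by norm_num) (by norm_num)
  have h3 := hsub (3/4) 1 (by norm_num) le_rfl (by norm_num)
  have h13 := hsub 0 (3/4) le_rfl (by norm_num) (by norm_num)
  have hsplit1 := intervalIntegral.integral_add_adjacent_intervals h1 h2
  have hsplit2 := intervalIntegral.integral_add_adjacent_intervals h13 h3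
  have hn1 : 0 ≤ ∫ t in (0:ℝ)..(1/4), q t :=
    intervalIntegral.integral_nonneg (by norm_num)
      (fun u hu => hnonneg u ⟨hu.1, by linarith [hu.2]⟩)
  have hn3 : 0 ≤ ∫ t in (3/4:ℝ)..1, q t :=
    intervalIntegral.integral_nonneg (by norm_num)
      (fun u hu => hnonneg u ⟨by linarith [hu.1], hu.2⟩)
  have hmid : 0 < ∫ t in (1/4:ℝ)..(3/4), q t :=
    intervalIntegral_pos_of_pos_on h2 hpos (by norm_num)
  have htotal : 0 < ∫ t in (0:ℝ)..1, q t := by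
    rw [← hsplit2, ← hsplit1]
    linarith
  have hdiff : phi Q a'' b - phi Q a b = ∫ t in (0:ℝ)..1, q t := by
    rw [phi, phi, ← intervalIntegral.integral_sub (hint a'') (hint a)]
    apply intervalIntegral.integral_congr
    intro t _
    simp only [hq]
    rw [div_sub_div_same]
  linarith

end Aux

/-- The map `a ↦ b(a)` is strictly increasing on the region where `φ(a, b(a)) ≥ 0`. -/
theorem b_strictMono (Q : Polynomial ℝ) (m : ℕ) (hm : 1 ≤ m)
    (hdeg : Q.natDegree = 2 * m) (hlead : 0 < Q.leadingCoeff)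
    (hconv : ∀ x : ℝ, 0 ≤ Q.derivative.derivative.eval x)
    (a₁ a₂ b₁ b₂ : ℝ) (ha : a₁ < a₂) (hb₁ : a₁ < b₁) (hb₂ : a₂ < b₂)
    (hψ₁ : psi Q a₁ b₁ = 0) (hψ₂ : psi Q a₂ b₂ = 0) (hφ₁ : 0 ≤ phi Q a₁ b₁) :
    b₁ < b₂ := by
  by_contra hcon
  push_neg at hcon   -- b₂ ≤ b₁
  have hsm : StrictMono fun x : ℝ => Q.derivative.eval x :=
    peval_strictMono Q.derivative (Qpp_ne_zero Q m hm hdeg hlead) hconv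
  set a' : ℝ := a₂ + (b₁ - b₂) with ha'
  have ha'1 : a₁ < a' := by simp only [ha']; linarith
  have ha'b : a' < b₁ := by simp only [ha']; linarith
  -- the function H
  set Hf : ℝ → ℝ := fun a =>
    (b₁ - a) * ∫ t in (0:ℝ)..1, Q.derivative.eval ((1-t)*b₁ + t*a) * Real.sqrt ((1-t)/t)
    with hHf
  have hH1 : Hf a₁ = 2 * Real.pi := by
    have := hψ₁
    rw [psi] at this
    simp only [hHf]
    linarith
  -- Step 1: Hf a' < Hf a₁
  have hstep1 : Hf a' < Hf a₁ := by
    have hanti : StrictAntiOn Hf (Set.Icc a₁ a') := by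
      apply strictAntiOn_of_deriv_neg (convex_Icc a₁ a')
      · intro x _
        exact (hasDerivAt_H Q.derivative b₁ x).continuousAt.continuousWithinAt
      · intro x hx
        rw [interior_Icc] at hx
        have hd := (hasDerivAt_H Q.derivative b₁ x).deriv
        rw [hd]
        have hphilt : phi Q a₁ b₁ < phi Q x b₁ := phi_lt Q hsm b₁ hx.1
        have : 0 < phi Q x b₁ := lt_of_le_of_lt hφ₁ hphilt
        rw [phi] at this
        linarith
    exact hanti (Set.left_mem_Icc.mpr ha'1.le) (Set.right_mem_Icc.mpr ha'1.le) ha'1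
  -- Step 2: 2π = N(a₂,b₂) ≤ Hf a'
  have hcontc : ∀ c d : ℝ, Continuous fun t : ℝ => Q.derivative.eval ((1-t)*d + t*c) :=
    fun c d => Q.derivative.continuous.comp (by continuity)
  have hstep2 : 2 * Real.pi ≤ Hf a' := by
    have hwidth : b₁ - a' = b₂ - a₂ := by simp only [ha']; ring
    have hmono : (∫ t in (0:ℝ)..1, Q.derivative.eval ((1-t)*b₂ + t*a₂) * Real.sqrt ((1-t)/t))
        ≤ ∫ t in (0:ℝ)..1, Q.derivative.eval ((1-t)*b₁ + t*a') * Real.sqrt ((1-t)/t) := by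
      apply intervalIntegral.integral_mono_on (by norm_num)
        (int_cont_mul (hcontc a₂ b₂) int_w2) (int_cont_mul (hcontc a' b₁) int_w2)
      intro t ht
      have harg : (1-t)*b₁ + t*a' = ((1-t)*b₂ + t*a₂) + (b₁ - b₂) := by
        simp only [ha']; ring
      have hle : Q.derivative.eval ((1-t)*b₂ + t*a₂)
          ≤ Q.derivative.eval ((1-t)*b₁ + t*a') := by
        rw [harg]
        exact hsm.monotone (by linarith)
      exact mul_le_mul_of_nonneg_right hle (Real.sqrt_nonneg _)
    have h2 : psi Q a₂ b₂ = 0 := hψ₂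
    rw [psi] at h2
    simp only [hHf]
    rw [hwidth]
    nlinarith [hmono, sub_pos.mpr hb₂]
  linarith
end
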